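/- arXiv:1404.3621 — 6 statements merged into one kernel-verified Lean document; each statement's English description precedes it below -/
import Mathlib

section
/- Let G be a finite group and A a group acting on G via automorphisms. For all positive integers i, j, the commutator subgroup [γ_i(G,A), γ_j(A)] is contained in γ_{i+j}(G,A), where γ_j(A) is the j-th term of the lower central series of A. -/
open SemidirectProduct
open scoped commutatorElement

/-- Left-normed commutator `[x, l₁, l₂, …]`. -/
def lnc {S : Type*} [Group S] (x : S) (l : List S) : S :=
  l.foldl (fun c y => ⁅c, y⁆) x

/-- `γ_k(G,A)`: the subgroup of the semidirect product `G ⋊[φ] A` generated by all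
left-normed commutators `[x₁,…,xₙ]` with `n ≥ k`, `x₁ ∈ G`, each `xᵢ ∈ G ∪ A`,
and at least `k-1` of the `xᵢ` in `A`. -/
def gammaGA {G A : Type*} [Group G] [Group A] (φ : A →* MulAut G) (k : ℕ) :
    Subgroup (G ⋊[φ] A) :=
  Subgroup.closure {x | ∃ (g : G) (l : List (G ⋊[φ] A)),
      k ≤ l.length + 1 ∧
      (∀ y ∈ l, (∃ h : G, y = inl h) ∨ (∃ a : A, y = inr a)) ∧
      (∃ s : Finset (Fin l.length), k - 1 ≤ s.card ∧
        ∀ i ∈ s, ∃ a : A, l.get i = inr a) ∧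
      x = lnc (inl g) l}

section Aux

variable {G A : Type*} [Group G] [Group A] (φ : A →* MulAut G)

/-- The generating set of `gammaGA φ k`. -/
def gaSet (k : ℕ) : Set (G ⋊[φ] A) :=
  {x | ∃ (g : G) (l : List (G ⋊[φ] A)),
      k ≤ l.length + 1 ∧
      (∀ y ∈ l, (∃ h : G, y = inl h) ∨ (∃ a : A, y = inr a)) ∧
      (∃ s : Finset (Fin l.length), k - 1 ≤ s.card ∧
        ∀ i ∈ s, ∃ a : A, l.get i = inr a) ∧
      x = lnc (inl g) l}

lemma gammaGA_eq (k : ℕ) : gammaGA φ k = Subgroup.closure (gaSet φ k) := rfl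

lemma lnc_append {S : Type*} [Group S] (x : S) (l : List S) (t : S) :
    lnc x (l ++ [t]) = ⁅lnc x l, t⁆ := by
  simp [lnc, List.foldl_append]

lemma gaSet_antitone {k m : ℕ} (h : k ≤ m) : gaSet φ m ⊆ gaSet φ k := by
  rintro x ⟨g, l, h1, h2, ⟨s, hs1, hs2⟩, rfl⟩
  exact ⟨g, l, le_trans h h1, h2, ⟨s, le_trans (Nat.sub_le_sub_right h 1) hs1, hs2⟩, rfl⟩

lemma gammaGA_antitone {k m : ℕ} (h : k ≤ m) : gammaGA φ m ≤ gammaGA φ k :=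
  Subgroup.closure_mono (gaSet_antitone φ h)

/-- Appending a `inl h` entry keeps a generator a generator. -/
lemma gaSet_append_inl {k : ℕ} {x : G ⋊[φ] A} (hx : x ∈ gaSet φ k) (h : G) :
    ⁅x, inl h⁆ ∈ gaSet φ k := by
  obtain ⟨g, l, h1, h2, ⟨s, hs1, hs2⟩, rfl⟩ := hx
  refine ⟨g, l ++ [inl h], ?_, ?_, ?_, (lnc_append _ _ _).symm⟩
  · simp only [List.length_append, List.length_singleton]
    omega
  · intro y hy
    rcases List.mem_append.1 hy with hy | hy
    · exact h2 y hy
    · simp only [List.mem_singleton] at hy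
      exact Or.inl ⟨h, hy⟩
  · refine ⟨s.map (Fin.castLEEmb (by simp)), by simpa using hs1, ?_⟩
    intro i hi
    obtain ⟨j, hj, rfl⟩ := Finset.mem_map.1 hi
    obtain ⟨a, ha⟩ := hs2 j hj
    refine ⟨a, ?_⟩
    simp only [List.get_eq_getElem] at ha ⊢
    exact (List.getElem_append_left j.isLt).trans ha

/-- Appending an `inr a` entry raises the level by one. -/
lemma gaSet_append_inr {k : ℕ} {x : G ⋊[φ] A} (hx : x ∈ gaSet φ k) (a : A) :
    ⁅x, inr a⁆ ∈ gaSet φ (k + 1) := by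
  obtain ⟨g, l, h1, h2, ⟨s, hs1, hs2⟩, rfl⟩ := hx
  have hlen : (l ++ [(inr a : G ⋊[φ] A)]).length = l.length + 1 := by simp
  refine ⟨g, l ++ [inr a], ?_, ?_, ?_, (lnc_append _ _ _).symm⟩
  · simp only [List.length_append, List.length_singleton]
    omega
  · intro y hy
    rcases List.mem_append.1 hy with hy | hy
    · exact h2 y hy
    · simp only [List.mem_singleton] at hy
      exact Or.inr ⟨a, hy⟩
  · have hle : l.length ≤ (l ++ [(inr a : G ⋊[φ] A)]).length := by simp
    set lastIdx : Fin (l ++ [(inr a : G ⋊[φ] A)]).length := ⟨l.length, by simp⟩ with hlast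
    refine ⟨insert lastIdx (s.map (Fin.castLEEmb hle)), ?_, ?_⟩
    · have hnotmem : lastIdx ∉ s.map (Fin.castLEEmb hle) := by
        intro hmem
        obtain ⟨j, _, hj⟩ := Finset.mem_map.1 hmem
        have hj' : (j : ℕ) = l.length := congrArg Fin.val hj
        have := j.isLt
        omega
      rw [Finset.card_insert_of_notMem hnotmem, Finset.card_map]
      omega
    · intro i hi
      rcases Finset.mem_insert.1 hi with hi | hi
      · subst hi
        refine ⟨a, ?_⟩
        simp only [List.get_eq_getElem]
        exact List.getElem_concat_length rfl _
      · obtain ⟨j, hj, rfl⟩ := Finset.mem_map.1 hi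
        obtain ⟨b, hb⟩ := hs2 j hj
        refine ⟨b, ?_⟩
        simp only [List.get_eq_getElem] at hb ⊢
        exact (List.getElem_append_left j.isLt).trans hb

/-- Commutators of elements of `gammaGA φ k` with pure (`inl` or `inr`) elements stay
in `gammaGA φ k`. -/
lemma comm_pure_mem {k : ℕ} {x : G ⋊[φ] A} (hx : x ∈ gammaGA φ k)
    (t : G ⋊[φ] A) (ht : (∃ h : G, t = inl h) ∨ (∃ a : A, t = inr a)) :
    ⁅x, t⁆ ∈ gammaGA φ k := by
  rw [gammaGA_eq] at hx
  induction hx using Subgroup.closure_induction with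
  | mem y hy =>
      rcases ht with ⟨h, rfl⟩ | ⟨a, rfl⟩
      · exact Subgroup.subset_closure (gaSet_append_inl φ hy h)
      · exact gammaGA_antitone φ (Nat.le_succ k)
          (Subgroup.subset_closure (gaSet_append_inr φ hy a))
  | one => simp only [commutatorElement_one_left]; exact one_mem _
  | mul y z hy hz py pz =>
      have hid : ⁅y * z, t⁆ = y * ⁅z, t⁆ * y⁻¹ * ⁅y, t⁆ := by group
      rw [hid]
      exact mul_mem (mul_mem (mul_mem hy pz) (inv_mem hy)) py
  | inv y hy py =>
      have hid : ⁅y⁻¹, t⁆ = y⁻¹ * ⁅y, t⁆⁻¹ * y := by group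
      rw [hid]
      exact mul_mem (mul_mem (inv_mem hy) (inv_mem py)) hy

instance gammaGA_normal (k : ℕ) : (gammaGA φ k).Normal := by
  constructor
  intro x hx z
  have key : ∀ t : G ⋊[φ] A, ((∃ h : G, t = inl h) ∨ (∃ a : A, t = inr a)) →
      ∀ y ∈ gammaGA φ k, t * y * t⁻¹ ∈ gammaGA φ k := by
    intro t ht y hy
    have hid : t * y * t⁻¹ = y * ⁅y⁻¹, t⁆ := by group
    rw [hid]
    exact mul_mem hy (comm_pure_mem φ (inv_mem hy) t ht)
  have hz : z * x * z⁻¹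
      = inl z.left * (inr z.right * x * (inr z.right)⁻¹) * (inl z.left)⁻¹ := by
    conv_lhs => rw [← inl_left_mul_inr_right z]
    group
  rw [hz]
  apply key (inl z.left) (Or.inl ⟨z.left, rfl⟩)
  exact key (inr z.right) (Or.inr ⟨z.right, rfl⟩) x hx

/-- Commutators with elements of `A` raise the level by one. -/
lemma comm_inr_mem {k : ℕ} {x : G ⋊[φ] A} (hx : x ∈ gammaGA φ k) (a : A) :
    ⁅x, (inr a : G ⋊[φ] A)⁆ ∈ gammaGA φ (k + 1) := by
  rw [gammaGA_eq] at hx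
  induction hx using Subgroup.closure_induction with
  | mem y hy => exact Subgroup.subset_closure (gaSet_append_inr φ hy a)
  | one => simp only [commutatorElement_one_left]; exact one_mem _
  | mul y z hy hz py pz =>
      have hid : ⁅y * z, (inr a : G ⋊[φ] A)⁆ = y * ⁅z, inr a⁆ * y⁻¹ * ⁅y, inr a⁆ := by group
      rw [hid]
      exact mul_mem ((gammaGA_normal φ (k + 1)).conj_mem _ pz y) py
  | inv y hy py =>
      have hid : ⁅y⁻¹, (inr a : G ⋊[φ] A)⁆ = y⁻¹ * ⁅y, inr a⁆⁻¹ * (y⁻¹)⁻¹ := by group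
      rw [hid]
      exact (gammaGA_normal φ (k + 1)).conj_mem _ (inv_mem py) y⁻¹

lemma comm_inr_top (k : ℕ) :
    ⁅gammaGA φ k, (⊤ : Subgroup A).map (inr : A →* G ⋊[φ] A)⁆ ≤ gammaGA φ (k + 1) := by
  rw [Subgroup.commutator_le]
  rintro x hx y ⟨a, -, rfl⟩
  exact comm_inr_mem φ hx a

/-- The three subgroups lemma, modulo a normal subgroup. -/
lemma tsl_mod {P : Type*} [Group P] (M H₁ H₂ H₃ : Subgroup P) [M.Normal]
    (h1 : ⁅⁅H₂, H₃⁆, H₁⁆ ≤ M) (h2 : ⁅⁅H₃, H₁⁆, H₂⁆ ≤ M) : ⁅⁅H₁, H₂⁆, H₃⁆ ≤ M := by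
  have key : ∀ X : Subgroup P, X ≤ M ↔ X.map (QuotientGroup.mk' M) = ⊥ := by
    intro X
    rw [Subgroup.map_eq_bot_iff, QuotientGroup.ker_mk']
  rw [key] at h1 h2 ⊢
  rw [Subgroup.map_commutator, Subgroup.map_commutator] at h1 h2 ⊢
  exact Subgroup.commutator_commutator_eq_bot_of_rotate h1 h2

lemma main_aux : ∀ n : ℕ, ∀ i : ℕ, 1 ≤ i →
    ⁅gammaGA φ i, ((⊤ : Subgroup A).lowerCentralSeries n).map (inr : A →* G ⋊[φ] A)⁆
      ≤ gammaGA φ (i + n + 1) := by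
  intro n
  induction n with
  | zero =>
      intro i hi
      have h0 : (⊤ : Subgroup A).lowerCentralSeries 0 = ⊤ := rfl
      rw [h0]
      exact comm_inr_top φ i
  | succ n ih =>
      intro i hi
      have hsucc : (⊤ : Subgroup A).lowerCentralSeries (n + 1) = ⁅(⊤ : Subgroup A).lowerCentralSeries n, ⊤⁆ := rfl
      rw [hsucc, Subgroup.map_commutator, Subgroup.commutator_comm]
      apply tsl_mod
      · -- ⁅⁅map inr ⊤, gammaGA i⁆, map inr (LCS n)⁆ ≤ _
        calc ⁅⁅(⊤ : Subgroup A).map (inr : A →* G ⋊[φ] A), gammaGA φ i⁆,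
              ((⊤ : Subgroup A).lowerCentralSeries n).map (inr : A →* G ⋊[φ] A)⁆
            ≤ ⁅gammaGA φ (i + 1), ((⊤ : Subgroup A).lowerCentralSeries n).map (inr : A →* G ⋊[φ] A)⁆ := by
              apply Subgroup.commutator_mono _ le_rfl
              rw [Subgroup.commutator_comm]
              exact comm_inr_top φ i
          _ ≤ gammaGA φ (i + 1 + n + 1) := ih (i + 1) (by omega)
          _ ≤ gammaGA φ (i + (n + 1) + 1) := by
              apply gammaGA_antitone
              omega
      · calc ⁅⁅gammaGA φ i, ((⊤ : Subgroup A).lowerCentralSeries n).map (inr : A →* G ⋊[φ] A)⁆,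
              (⊤ : Subgroup A).map (inr : A →* G ⋊[φ] A)⁆
            ≤ ⁅gammaGA φ (i + n + 1), (⊤ : Subgroup A).map (inr : A →* G ⋊[φ] A)⁆ :=
              Subgroup.commutator_mono (ih i hi) le_rfl
          _ ≤ gammaGA φ (i + n + 1 + 1) := comm_inr_top φ (i + n + 1)
          _ ≤ gammaGA φ (i + (n + 1) + 1) := by
              apply gammaGA_antitone
              omega

end Aux

theorem stmt0 {G A : Type*} [Group G] [Group A] [Finite G] (φ : A →* MulAut G)
    (i j : ℕ) (hi : 1 ≤ i) (hj : 1 ≤ j) :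
    ⁅gammaGA φ i, ((⊤ : Subgroup A).lowerCentralSeries (j - 1)).map (inr : A →* G ⋊[φ] A)⁆
      ≤ gammaGA φ (i + j) := by
  have h := main_aux φ (j - 1) i hi
  have hij : i + (j - 1) + 1 = i + j := by omega
  rwa [hij] at h
end

section
/- Let G be a group, A a group acting on G via automorphisms, and k ≥ 2. Then γ_{k-1}([G,A]) ≤ γ_k(G,A), i.e., the (k−1)-st term of the lower central series of H = [G,A] is contained in γ_k(G,A). -/
open SemidirectProduct
open scoped commutatorElement

namespace GammaAux

lemma lnc_concat {S : Type*} [Group S] (x y : S) (l : List S) :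
    lnc x (l ++ [y]) = ⁅lnc x l, y⁆ := by
  simp [lnc, List.foldl_append]

variable {G A : Type*} [Group G] [Group A] (φ : A →* MulAut G)

def genSet (k : ℕ) : Set (G ⋊[φ] A) :=
  {x | ∃ (g : G) (l : List (G ⋊[φ] A)),
      k ≤ l.length + 1 ∧
      (∀ y ∈ l, (∃ h : G, y = inl h) ∨ (∃ a : A, y = inr a)) ∧
      (∃ s : Finset (Fin l.length), k - 1 ≤ s.card ∧
        ∀ i ∈ s, ∃ a : A, l.get i = inr a) ∧
      x = lnc (inl g) l}

lemma gammaGA_eq (k : ℕ) : gammaGA φ k = Subgroup.closure (genSet φ k) := rfl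

/-- embedding `Fin n → Fin (n+1)`-ish used below -/
private def emb (l : List (G ⋊[φ] A)) (y : G ⋊[φ] A) :
    Fin l.length ↪ Fin (l ++ [y]).length :=
  ⟨fun i => ⟨i.1, by simp⟩, fun i j hij => Fin.ext (by
    simpa using congrArg Fin.val hij)⟩

lemma genSet_append {k : ℕ} {x : G ⋊[φ] A} (hx : x ∈ genSet φ k) (y : G ⋊[φ] A)
    (hy : (∃ h : G, y = inl h) ∨ (∃ a : A, y = inr a)) :
    ⁅x, y⁆ ∈ genSet φ k := by
  obtain ⟨g, l, hlen, hmem, ⟨s, hcard, hs⟩, rfl⟩ := hx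
  refine ⟨g, l ++ [y], by simp; omega, ?_, ?_, (lnc_concat _ _ _).symm⟩
  · intro z hz
    rcases List.mem_append.1 hz with h | h
    · exact hmem z h
    · simp only [List.mem_singleton] at h; subst h; exact hy
  · refine ⟨s.map (emb φ l y), by simpa using hcard, ?_⟩
    intro i hi
    simp only [Finset.mem_map] at hi
    obtain ⟨j, hj, rfl⟩ := hi
    obtain ⟨a, ha⟩ := hs j hj
    refine ⟨a, ?_⟩
    simp only [List.get_eq_getElem] at ha ⊢
    exact (List.getElem_append_left (bs := [y]) j.isLt).trans ha

lemma genSet_append_inr {k : ℕ} {x : G ⋊[φ] A} (hx : x ∈ genSet φ k) (a : A) :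
    ⁅x, inr a⁆ ∈ genSet φ (k + 1) := by
  obtain ⟨g, l, hlen, hmem, ⟨s, hcard, hs⟩, rfl⟩ := hx
  refine ⟨g, l ++ [inr a], by simp; omega, ?_, ?_, (lnc_concat _ _ _).symm⟩
  · intro z hz
    rcases List.mem_append.1 hz with h | h
    · exact hmem z h
    · simp only [List.mem_singleton] at h; subst h; exact Or.inr ⟨a, rfl⟩
  · refine ⟨insert ⟨l.length, by simp⟩ (s.map (emb φ l (inr a))), ?_, ?_⟩
    · rw [Finset.card_insert_of_notMem, Finset.card_map]
      · omega
      · intro hmem'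
        simp only [Finset.mem_map] at hmem'
        obtain ⟨j, _, hj⟩ := hmem'
        have : j.1 = l.length := congrArg Fin.val hj
        omega
    · intro i hi
      rcases Finset.mem_insert.1 hi with h | h
      · subst h
        refine ⟨a, ?_⟩
        simp only [List.get_eq_getElem]
        exact List.getElem_concat_length (l := l) rfl _
      · simp only [Finset.mem_map] at h
        obtain ⟨j, hj, rfl⟩ := h
        obtain ⟨b, hb⟩ := hs j hj
        refine ⟨b, ?_⟩
        simp only [List.get_eq_getElem] at hb ⊢
        exact (List.getElem_append_left (bs := [inr a]) j.isLt).trans hb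

lemma conj_mem_gammaGA {k : ℕ} {z x : G ⋊[φ] A}
    (hz : (∃ h : G, z = inl h) ∨ (∃ a : A, z = inr a))
    (hx : x ∈ gammaGA φ k) : z * x * z⁻¹ ∈ gammaGA φ k := by
  have hx' : x ∈ Subgroup.closure (genSet φ k) := hx
  clear hx
  induction hx' using Subgroup.closure_induction with
  | mem s hs =>
      have h1 : ⁅s, z⁆⁻¹ ∈ gammaGA φ k :=
        inv_mem (Subgroup.subset_closure (genSet_append φ hs z hz))
      have h2 : z * s * z⁻¹ = ⁅s, z⁆⁻¹ * s := by group
      rw [h2]; exact mul_mem h1 (Subgroup.subset_closure hs)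
  | one => simpa using one_mem (gammaGA φ k)
  | mul a b _ _ ha hb =>
      have h : z * (a * b) * z⁻¹ = (z * a * z⁻¹) * (z * b * z⁻¹) := by group
      rw [h]; exact mul_mem ha hb
  | inv a _ ha =>
      have h : z * a⁻¹ * z⁻¹ = (z * a * z⁻¹)⁻¹ := by group
      rw [h]; exact inv_mem ha

lemma gammaGA_normal (k : ℕ) : (gammaGA φ k).Normal := by
  constructor
  intro n hn z
  have h1 := conj_mem_gammaGA φ (Or.inr ⟨z.right, rfl⟩) hn
  have h2 := conj_mem_gammaGA φ (Or.inl ⟨z.left, rfl⟩) h1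
  have e : z * n * z⁻¹ =
      inl (φ := φ) z.left * (inr z.right * n * (inr z.right)⁻¹) * (inl z.left)⁻¹ := by
    conv_lhs => rw [← inl_left_mul_inr_right z]
    group
  rw [e]; exact h2

instance instGammaNormal (k : ℕ) : (gammaGA φ k).Normal := gammaGA_normal φ k

instance instClosureGenSetNormal (k : ℕ) : (Subgroup.closure (genSet φ k)).Normal :=
  gammaGA_normal φ k

lemma comm_mem_of_mem_normal {P : Type*} [Group P] {N : Subgroup P} (hN : N.Normal)
    {n : P} (hn : n ∈ N) (y : P) : ⁅n, y⁆ ∈ N := by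
  have e : ⁅n, y⁆ = n * (y * n⁻¹ * y⁻¹) := by group
  rw [e]; exact mul_mem hn (hN.conj_mem _ (inv_mem hn) y)

lemma commutator_mem_closure {P : Type*} [Group P] {N : Subgroup P} [N.Normal]
    {S : Set P} {g : P} (h : ∀ s ∈ S, ⁅s, g⁆ ∈ N) :
    ∀ x ∈ Subgroup.closure S, ⁅x, g⁆ ∈ N := by
  intro x hx
  set π := QuotientGroup.mk' N with hπ
  have key : ∀ z : P, ⁅z, g⁆ ∈ N ↔ π z * π g = π g * π z := by
    intro z
    constructor
    · intro hz
      have h1 : π ⁅z, g⁆ = 1 := (QuotientGroup.eq_one_iff _).mpr hz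
      rw [map_commutatorElement] at h1
      exact commutatorElement_eq_one_iff_commute.mp h1
    · intro hc
      have h1 : π ⁅z, g⁆ = 1 := by
        rw [map_commutatorElement]
        exact commutatorElement_eq_one_iff_commute.mpr hc
      exact (QuotientGroup.eq_one_iff _).mp h1
  have hle : Subgroup.closure S ≤ (Subgroup.centralizer {π g}).comap π := by
    rw [Subgroup.closure_le]
    intro s hs
    simp only [SetLike.mem_coe, Subgroup.mem_comap, Subgroup.mem_centralizer_iff,
      Set.mem_singleton_iff, forall_eq]
    exact ((key s).mp (h s hs)).symm
  have := hle hx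
  simp only [Subgroup.mem_comap, Subgroup.mem_centralizer_iff, Set.mem_singleton_iff,
    forall_eq] at this
  exact (key x).mpr this.symm

lemma commutator_mem_closure' {P : Type*} [Group P] {N : Subgroup P} [N.Normal]
    {S : Set P} {g : P} (h : ∀ s ∈ S, ⁅g, s⁆ ∈ N) :
    ∀ x ∈ Subgroup.closure S, ⁅g, x⁆ ∈ N := by
  intro x hx
  have h' : ∀ s ∈ S, ⁅s, g⁆ ∈ N := by
    intro s hs
    have e : ⁅s, g⁆ = ⁅g, s⁆⁻¹ := by group
    rw [e]; exact inv_mem (h s hs)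
  have hxg := commutator_mem_closure h' x hx
  have e : ⁅g, x⁆ = ⁅x, g⁆⁻¹ := by group
  rw [e]; exact inv_mem hxg

lemma comm_inr_mem {k : ℕ} {x : G ⋊[φ] A} (hx : x ∈ gammaGA φ k) (a : A) :
    ⁅x, inr (φ := φ) a⁆ ∈ gammaGA φ (k + 1) := by
  exact commutator_mem_closure
    (fun s hs => Subgroup.subset_closure (genSet_append_inr φ hs a)) x hx

lemma comm_inl_mem {k : ℕ} {x : G ⋊[φ] A} (hx : x ∈ gammaGA φ k) (h : G) :
    ⁅x, inl (φ := φ) h⁆ ∈ gammaGA φ k := by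
  exact commutator_mem_closure
    (fun s hs => Subgroup.subset_closure (genSet_append φ hs _ (Or.inl ⟨h, rfl⟩))) x hx

lemma comm_H_mem {k : ℕ} {x : G ⋊[φ] A} (hx : x ∈ gammaGA φ k) (g : G) (a : A) :
    ⁅x, ⁅inl (φ := φ) g, inr a⁆⁆ ∈ gammaGA φ (k + 1) := by
  have hN := gammaGA_normal φ (k + 1)
  set p : G ⋊[φ] A := inl g with hp
  set q : G ⋊[φ] A := inr a with hq
  have m2 : ⁅⁅x⁻¹, p⁻¹⁆, q⁆ ∈ gammaGA φ (k + 1) := by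
    have h1 : ⁅x⁻¹, p⁻¹⁆ ∈ gammaGA φ k := by
      have := comm_inl_mem φ (inv_mem hx) g⁻¹
      rwa [map_inv, ← hp] at this
    exact comm_inr_mem φ h1 a
  have m3 : ⁅⁅q⁻¹, x⁆, p⁻¹⁆ ∈ gammaGA φ (k + 1) := by
    have h1 : ⁅x, q⁻¹⁆ ∈ gammaGA φ (k + 1) := by
      have := comm_inr_mem φ hx a⁻¹
      rwa [map_inv, ← hq] at this
    have h2 : ⁅q⁻¹, x⁆ ∈ gammaGA φ (k + 1) := by
      have e : ⁅q⁻¹, x⁆ = ⁅x, q⁻¹⁆⁻¹ := by group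
      rw [e]; exact inv_mem h1
    exact comm_mem_of_mem_normal hN h2 p⁻¹
  have hw : (p⁻¹ * ⁅⁅p, q⁆, x⁆ * p) *
      ((x * ⁅⁅x⁻¹, p⁻¹⁆, q⁆ * x⁻¹) * (q * ⁅⁅q⁻¹, x⁆, p⁻¹⁆ * q⁻¹)) = 1 := by
    group
  have hA : p⁻¹ * ⁅⁅p, q⁆, x⁆ * p ∈ gammaGA φ (k + 1) := by
    have e := eq_inv_of_mul_eq_one_left hw
    rw [e]
    exact inv_mem (mul_mem (hN.conj_mem _ m2 x) (hN.conj_mem _ m3 q))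
  have hB : ⁅⁅p, q⁆, x⁆ ∈ gammaGA φ (k + 1) := by
    have e : ⁅⁅p, q⁆, x⁆ = p * (p⁻¹ * ⁅⁅p, q⁆, x⁆ * p) * p⁻¹ := by group
    rw [e]; exact hN.conj_mem _ hA p
  have e : ⁅x, ⁅p, q⁆⁆ = ⁅⁅p, q⁆, x⁆⁻¹ := by group
  rw [e]; exact inv_mem hB

lemma comm_gamma_H_le (k : ℕ) :
    ⁅gammaGA φ k, ⁅(⊤ : Subgroup G).map (inl : G →* G ⋊[φ] A),
      (⊤ : Subgroup A).map (inr : A →* G ⋊[φ] A)⁆⁆ ≤ gammaGA φ (k + 1) := by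
  rw [Subgroup.commutator_le]
  intro x hx w hw
  rw [Subgroup.commutator_def] at hw
  refine commutator_mem_closure' ?_ w hw
  rintro s ⟨p, hp, q, hq, rfl⟩
  simp only [Subgroup.mem_map, Subgroup.mem_top, true_and] at hp hq
  obtain ⟨g, rfl⟩ := hp
  obtain ⟨a, rfl⟩ := hq
  exact comm_H_mem φ hx g a

lemma base_gen (g : G) (a : A) : ⁅inl (φ := φ) g, inr a⁆ ∈ genSet φ 2 := by
  refine ⟨g, [inr a], by simp, ?_, ?_, by simp [lnc]⟩
  · intro y hy
    simp only [List.mem_singleton] at hy; subst hy; exact Or.inr ⟨a, rfl⟩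
  · exact ⟨{⟨0, by simp⟩}, by simp, fun i hi => by
      simp only [Finset.mem_singleton] at hi; subst hi; exact ⟨a, rfl⟩⟩

lemma lcs_le {H : Subgroup (G ⋊[φ] A)}
    (hH : H = ⁅(⊤ : Subgroup G).map (inl : G →* G ⋊[φ] A),
               (⊤ : Subgroup A).map (inr : A →* G ⋊[φ] A)⁆) :
    ∀ m, lowerCentralSeries H m ≤ gammaGA φ (m + 2) := by
  have htop : ((⊤ : Subgroup H).map H.subtype) = H := by
    rw [← MonoidHom.range_eq_map, Subgroup.range_subtype]
  intro m
  induction m with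
  | zero =>
      show H ≤ gammaGA φ 2
      rw [hH, Subgroup.commutator_le]
      intro p hp q hq
      simp only [Subgroup.mem_map, Subgroup.mem_top, true_and] at hp hq
      obtain ⟨g, rfl⟩ := hp
      obtain ⟨a, rfl⟩ := hq
      exact Subgroup.subset_closure (base_gen φ g a)
  | succ m ih =>
      have e : lowerCentralSeries H (m + 1) = ⁅lowerCentralSeries H m, H⁆ := rfl
      rw [e]
      calc ⁅lowerCentralSeries H m, H⁆
          ≤ ⁅gammaGA φ (m + 2), H⁆ := Subgroup.commutator_mono ih le_rfl
        _ ≤ gammaGA φ (m + 3) := by rw [hH]; exact comm_gamma_H_le φ (m + 2)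

end GammaAux

theorem stmt4 {G A : Type*} [Group G] [Group A] (φ : A →* MulAut G)
    (k : ℕ) (hk : 2 ≤ k)
    (H : Subgroup (G ⋊[φ] A))
    (hH : H = ⁅(⊤ : Subgroup G).map (inl : G →* G ⋊[φ] A),
               (⊤ : Subgroup A).map (inr : A →* G ⋊[φ] A)⁆) :
    ∀ x ∈ lowerCentralSeries H (k - 2), (x : G ⋊[φ] A) ∈ gammaGA φ k := by
  intro x hx
  have h2 : k - 2 + 2 = k := by omega
  have := GammaAux.lcs_le φ hH (k - 2) hx
  rwa [h2] at this
end

section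
/- Let G be a finite 2-group and A a group of order 2 acting on G via automorphisms such that A fixes every element of order dividing 4 in γ_2(G,A) = [G,A]. Then [G,A] is elementary abelian (has exponent at most 2). -/
open SemidirectProduct

theorem stmt8 {G A : Type*} [Group G] [Group A] [Finite G] [Finite A]
    (hG : IsPGroup 2 G) (hA : Nat.card A = 2)
    (φ : A →* MulAut G)
    (hfix : ∀ x ∈ (⁅(⊤ : Subgroup G).map (inl : G →* G ⋊[φ] A),
                    (⊤ : Subgroup A).map (inr : A →* G ⋊[φ] A)⁆ : Subgroup (G ⋊[φ] A)),
      x ^ 4 = 1 → ∀ a : A, (inr a : G ⋊[φ] A) * x * (inr a : G ⋊[φ] A)⁻¹ = x) :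
    ∀ x ∈ (⁅(⊤ : Subgroup G).map (inl : G →* G ⋊[φ] A),
            (⊤ : Subgroup A).map (inr : A →* G ⋊[φ] A)⁆ : Subgroup (G ⋊[φ] A)),
      x ^ 2 = 1 := by
  classical
  set P := G ⋊[φ] A with hP
  set K : Subgroup P := ⁅(⊤ : Subgroup G).map (inl : G →* P),
      (⊤ : Subgroup A).map (inr : A →* P)⁆ with hKdef
  -- A = {1, a₀} for some a₀ ≠ 1
  obtain ⟨a₀, ha₀ne, key2⟩ : ∃ a₀ : A, a₀ ≠ 1 ∧ ∀ a : A, a = 1 ∨ a = a₀ := by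
    obtain ⟨x, y, hxy, hU⟩ := Nat.card_eq_two_iff.mp hA
    have hmem : ∀ a : A, a = x ∨ a = y := by
      intro a
      have : a ∈ ({x, y} : Set A) := hU ▸ Set.mem_univ a
      simpa using this
    rcases hmem 1 with h | h
    · refine ⟨y, by rintro rfl; exact hxy h.symm, fun a => ?_⟩
      rcases hmem a with h' | h'
      · exact Or.inl (h'.trans h.symm)
      · exact Or.inr h'
    · refine ⟨x, by rintro rfl; exact hxy h, fun a => ?_⟩
      rcases hmem a with h' | h'
      · exact Or.inr h'
      · exact Or.inl (h'.trans h.symm)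
  have ha₀2 : a₀ * a₀ = 1 := by
    rcases key2 (a₀ * a₀) with h | h
    · exact h
    · exact absurd (mul_right_cancel (h.trans (one_mul a₀).symm) :) ha₀ne
  have hσσ : ∀ g : G, φ a₀ (φ a₀ g) = g := by
    intro g
    have h1 : φ a₀ * φ a₀ = 1 := by rw [← map_mul, ha₀2, map_one]
    have := congrArg (fun ψ : MulAut G => ψ g) h1
    simpa using this
  -- the generators of K, as elements of G
  set d : G → G := fun g => g * (φ a₀ g)⁻¹ with hd
  open scoped commutatorElement in
  have comm_eq : ∀ (g : G) (a : A), ⁅(inl g : P), (inr a : P)⁆ = (inl (g * (φ a g)⁻¹) : P) := by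
    intro g a
    rw [commutatorElement_def, ← map_inv (φ a) g, map_mul, inl_aut, ← map_inv inl,
      ← map_inv inr]
    group
  have mem_K : ∀ g : G, (inl (d g) : P) ∈ K := by
    intro g
    have := Subgroup.commutator_mem_commutator
      (Subgroup.mem_map_of_mem (inl : G →* P) (Subgroup.mem_top g))
      (Subgroup.mem_map_of_mem (inr : A →* P) (Subgroup.mem_top a₀))
    rwa [comm_eq] at this
  -- P is a 2-group
  have hP2 : IsPGroup 2 P := by
    intro x
    have hx2 : rightHom (x * x) = 1 := by
      rw [map_mul]
      rcases key2 (rightHom x) with h | h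
      · rw [h, mul_one]
      · rw [h]; exact ha₀2
    have hxr : x * x ∈ (inl : G →* P).range := by
      rw [range_inl_eq_ker_rightHom]; exact hx2
    obtain ⟨g, hg⟩ := hxr
    obtain ⟨n, hn⟩ := hG g
    refine ⟨n + 1, ?_⟩
    have : (2 : ℕ) ^ (n + 1) = 2 * 2 ^ n := by ring
    rw [this, pow_mul, pow_two, ← hg, ← map_pow, hn, map_one]
  have : Fact (Nat.Prime 2) := ⟨Nat.prime_two⟩
  -- key lemma: inverted elements of K are involutions
  have sq_of_inv : ∀ x : P, x ∈ K → (inr a₀ : P) * x * (inr a₀)⁻¹ = x⁻¹ → x * x = 1 := by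
    intro x hxK hinv
    obtain ⟨n, hn⟩ := (IsPGroup.iff_orderOf.mp hP2) x
    by_contra hne
    have hne' : x ^ 2 ≠ 1 := by rwa [pow_two]
    have hn2 : 2 ≤ n := by
      by_contra h
      push_neg at h
      have : (2 : ℕ) ^ n ∣ 2 := by
        interval_cases n
        · exact one_dvd 2
        · exact dvd_rfl
      exact hne' (orderOf_dvd_iff_pow_eq_one.mp (hn ▸ this))
    set t : P := x ^ (2 ^ (n - 2)) with ht
    have ht4 : t ^ 4 = 1 := by
      rw [ht, ← pow_mul]
      have h24 : 2 ^ (n - 2) * 4 = 2 ^ n := by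
        have hsub : n - 2 + 2 = n := Nat.sub_add_cancel hn2
        calc 2 ^ (n - 2) * 4 = 2 ^ (n - 2) * 2 ^ 2 := rfl
          _ = 2 ^ (n - 2 + 2) := (pow_add 2 _ 2).symm
          _ = 2 ^ n := by rw [hsub]
      rw [h24, ← hn, pow_orderOf_eq_one]
    have htK : t ∈ K := pow_mem hxK _
    have hfixt := hfix t htK ht4 a₀
    have hconj : (inr a₀ : P) * t * (inr a₀)⁻¹ = t⁻¹ := by
      rw [ht, ← conj_pow, hinv, inv_pow]
    have ht2 : t * t = 1 := by
      have heq : t = t⁻¹ := hfixt.symm.trans hconj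
      rw [← mul_inv_cancel t]
      exact congrArg (t * ·) heq
    have hx1 : x ^ (2 ^ (n - 1)) = 1 := by
      have h2 : 2 ^ (n - 1) = 2 ^ (n - 2) + 2 ^ (n - 2) := by
        have : n - 1 = n - 2 + 1 := by omega
        rw [this, pow_succ]
        ring
      rw [h2, pow_add, ← ht, ht2]
    have hdvd := orderOf_dvd_of_pow_eq_one hx1
    rw [hn] at hdvd
    have hle := Nat.le_of_dvd (Nat.pow_pos (by norm_num)) hdvd
    have := Nat.pow_le_pow_iff_right (a := 2) (by norm_num) |>.mp hle
    omega
  -- each d g is an involution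
  have hsq : ∀ g : G, d g * d g = 1 := by
    intro g
    have hφd : φ a₀ (d g) = (d g)⁻¹ := by
      rw [hd]
      simp only [map_mul, map_inv, hσσ, mul_inv_rev, inv_inv]
    have h1 : (inr a₀ : P) * inl (d g) * (inr a₀)⁻¹ = (inl (d g))⁻¹ := by
      calc (inr a₀ : P) * inl (d g) * (inr a₀)⁻¹
          = inr a₀ * inl (d g) * inr a₀⁻¹ := by rw [map_inv]
        _ = inl (φ a₀ (d g)) := (inl_aut a₀ (d g)).symm
        _ = inl ((d g)⁻¹) := by rw [hφd]
        _ = (inl (d g))⁻¹ := map_inv _ _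
    have := sq_of_inv (inl (d g)) (mem_K g) h1
    apply inl_injective (φ := φ)
    rw [map_mul, map_one]
    exact this
  -- the d g's commute pairwise
  have hcomm : ∀ u v : G, d u * d v = d v * d u := by
    intro u v
    have hrel : d u = v * d (v⁻¹ * u) * v⁻¹ * d v := by
      have : d (v * (v⁻¹ * u)) = v * d (v⁻¹ * u) * v⁻¹ * d v := by
        simp only [hd, map_mul, map_inv, mul_inv_rev]
        group
      rw [← this, mul_inv_cancel_left]
    have h1 : (d u * d v) * (d u * d v) = 1 := by
      have hdudv : d u * d v = v * d (v⁻¹ * u) * v⁻¹ := by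
        rw [hrel, mul_assoc, hsq v, mul_one]
      rw [hdudv]
      calc v * d (v⁻¹ * u) * v⁻¹ * (v * d (v⁻¹ * u) * v⁻¹)
          = v * (d (v⁻¹ * u) * d (v⁻¹ * u)) * v⁻¹ := by group
        _ = 1 := by rw [hsq]; group
    have huinv : (d u)⁻¹ = d u := inv_eq_of_mul_eq_one_right (hsq u)
    have hvinv : (d v)⁻¹ = d v := inv_eq_of_mul_eq_one_right (hsq v)
    have hinv1 : (d u * d v)⁻¹ = d u * d v := inv_eq_of_mul_eq_one_right h1
    calc d u * d v = (d u * d v)⁻¹ := hinv1.symm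
      _ = (d v)⁻¹ * (d u)⁻¹ := mul_inv_rev _ _
      _ = d v * d u := by rw [huinv, hvinv]
  -- every generator of K is of the form inl (d u)
  open scoped commutatorElement in
  have hC : ∀ c ∈ {g : P | ∃ g₁ ∈ (⊤ : Subgroup G).map (inl : G →* P),
      ∃ g₂ ∈ (⊤ : Subgroup A).map (inr : A →* P), ⁅g₁, g₂⁆ = g},
      ∃ u : G, c = inl (d u) := by
    rintro c ⟨g₁, hg₁, g₂, hg₂, rfl⟩
    obtain ⟨g, -, rfl⟩ := hg₁
    obtain ⟨a, -, rfl⟩ := hg₂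
    rcases key2 a with rfl | rfl
    · refine ⟨1, ?_⟩
      rw [comm_eq]
      simp [hd]
    · refine ⟨g, ?_⟩
      rw [comm_eq, hd]
  -- closure induction
  intro x hx
  rw [hKdef, Subgroup.commutator_def] at hx
  refine (Subgroup.closure_induction
    (p := fun y _ => y ^ 2 = 1 ∧ ∀ u : G, Commute (inl (d u) : P) y)
    ?_ ?_ ?_ ?_ hx).1
  · intro c hc
    obtain ⟨u, rfl⟩ := hC c hc
    constructor
    · rw [pow_two, ← map_mul, hsq, map_one]
    · intro w
      show (inl (d w) : P) * inl (d u) = inl (d u) * inl (d w)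
      rw [← map_mul, ← map_mul, hcomm]
  · exact ⟨one_pow 2, fun u => Commute.one_right _⟩
  · intro y z hymem hzmem hyp hzp
    have hyz : Commute y z := by
      open scoped commutatorElement in
      have hsub : {g : P | ∃ g₁ ∈ (⊤ : Subgroup G).map (inl : G →* P),
          ∃ g₂ ∈ (⊤ : Subgroup A).map (inr : A →* P), ⁅g₁, g₂⁆ = g}
          ⊆ (Subgroup.centralizer {z} : Set P) := by
        intro c hc
        obtain ⟨u, rfl⟩ := hC c hc
        have : (inl (d u) : P) ∈ Subgroup.centralizer {z} := by
          rw [Subgroup.mem_centralizer_iff]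
          intro h hh
          rw [Set.mem_singleton_iff] at hh
          subst hh
          exact ((hzp.2 u).symm).eq
        exact this
      have hy' : y ∈ Subgroup.centralizer {z} :=
        (Subgroup.closure_le (Subgroup.centralizer {z})).mpr hsub hymem
      exact (Subgroup.mem_centralizer_iff.mp hy' z rfl).symm
    refine ⟨?_, fun u => (hyp.2 u).mul_right (hzp.2 u)⟩
    rw [hyz.mul_pow, hyp.1, hzp.1, mul_one]
  · intro y hymem hyp
    exact ⟨by rw [inv_pow, hyp.1, inv_one], fun u => (hyp.2 u).inv_right⟩
end

section
/- Let G be a finite group, A a group acting on G via automorphisms with cyclic quotient K/[G,A] in the semidirect product K = [G,A]⋊A where A is cyclic, and suppose K is p-abelian (i.e., (xy)^p = x^p y^p for all x, y ∈ K). Then for any g ∈ G and generator σ of A of order p, the element x = [g,σ] satisfies x^{1+σ+...+σ^{p-1}} = x^p, and hence x^p = g^{-1}·σ^p(g). -/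
open SemidirectProduct

private lemma sdp_pow {G A : Type*} [Group G] [Group A] (φ : A →* MulAut G)
    (x : G) (σ : A) (n : ℕ) :
    (inl x * inr σ : G ⋊[φ] A) ^ n =
      inl (((List.range n).map fun i => φ (σ ^ i) x).prod) * inr (σ ^ n) := by
  induction n with
  | zero => simp
  | succ n ih =>
    rw [pow_succ, ih, List.range_succ, List.map_append, List.prod_append]
    simp only [List.map_cons, List.map_nil, List.prod_cons, List.prod_nil, mul_one, map_mul]
    rw [inl_aut, pow_succ]
    simp [mul_assoc, ← map_mul, ← map_pow, ← map_inv, inv_mul_cancel_left]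

private lemma tele {G A : Type*} [Group G] [Group A] (φ : A →* MulAut G)
    (σ : A) (g : G) (n : ℕ) :
    ((List.range n).map fun i => φ (σ ^ i) (g⁻¹ * φ σ g)).prod = g⁻¹ * φ (σ ^ n) g := by
  induction n with
  | zero => simp
  | succ n ih =>
    rw [List.range_succ, List.map_append, List.prod_append, ih]
    have : (φ (σ ^ n)) (g⁻¹ * (φ σ) g) = ((φ (σ ^ n)) g)⁻¹ * (φ (σ ^ (n + 1))) g := by
      rw [map_mul, map_inv, pow_succ, map_mul]
      rfl
    simp only [List.map_cons, List.map_nil, List.prod_cons, List.prod_nil, mul_one, this]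
    rw [← mul_assoc, mul_assoc (g⁻¹), mul_inv_cancel, mul_one]

theorem stmt9 {G A : Type*} [Group G] [Group A] [Finite G]
    (p : ℕ) [Fact p.Prime] (φ : A →* MulAut G)
    (σ : A) (hσ : orderOf σ = p) (hgen : ∀ a : A, a ∈ Subgroup.zpowers σ)
    (K : Subgroup (G ⋊[φ] A))
    (hK : K = ⁅(⊤ : Subgroup G).map (inl : G →* G ⋊[φ] A),
               (⊤ : Subgroup A).map (inr : A →* G ⋊[φ] A)⁆
          ⊔ (⊤ : Subgroup A).map (inr : A →* G ⋊[φ] A))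
    (hpab : ∀ x ∈ K, ∀ y ∈ K, (x * y) ^ p = x ^ p * y ^ p)
    (g : G) :
    ((List.range p).map fun i => φ (σ ^ i) (g⁻¹ * φ σ g)).prod = (g⁻¹ * φ σ g) ^ p ∧
    (g⁻¹ * φ σ g) ^ p = g⁻¹ * φ (σ ^ p) g := by
  set x : G := g⁻¹ * φ σ g with hx
  have hσp : σ ^ p = 1 := by rw [← hσ]; exact pow_orderOf_eq_one σ
  have hinr : (inr σ : G ⋊[φ] A) ∈ K := by
    rw [hK]
    exact SetLike.le_def.mp le_sup_right (Subgroup.mem_map.2 ⟨σ, Subgroup.mem_top _, rfl⟩)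
  open scoped commutatorElement in
  have hcomm : (inl x : G ⋊[φ] A) = ⁅(inl g⁻¹ : G ⋊[φ] A), inr σ⁆ := by
    ext <;> simp [hx, commutatorElement_def]
  have hinl : (inl x : G ⋊[φ] A) ∈ K := by
    rw [hK, hcomm]
    exact SetLike.le_def.mp le_sup_left (Subgroup.commutator_mem_commutator
      (Subgroup.mem_map.2 ⟨g⁻¹, Subgroup.mem_top _, rfl⟩) (Subgroup.mem_map.2 ⟨σ, Subgroup.mem_top _, rfl⟩))
  have key := hpab _ hinl _ hinr
  rw [sdp_pow, ← map_pow, ← map_pow, hσp, map_one, mul_one, mul_one] at key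
  have h1 : ((List.range p).map fun i => φ (σ ^ i) x).prod = x ^ p := inl_injective key
  refine ⟨h1, ?_⟩
  rw [← h1, tele]
end

section
/- Let G be a finite p-group and A ≤ Aut(G). If A fixes every element of order dividing p (dividing 4 if p = 2) in γ_i(G,A) for some i ≥ 1, then A is a p-group. -/
open SemidirectProduct
open scoped commutatorElement

section Helpers

variable {P : Type*} [Group P]

lemma pgroup_q_pow_eq_one {p q : ℕ} (hp : p.Prime) (hq : q.Prime) (hne : q ≠ p)
    (hP : IsPGroup p P) {c : P} (hc : c ^ q = 1) : c = 1 := by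
  obtain ⟨k, hk⟩ := hP c
  have h1 : orderOf c ∣ q := orderOf_dvd_of_pow_eq_one hc
  have h2 : orderOf c ∣ p ^ k := orderOf_dvd_of_pow_eq_one hk
  rcases (Nat.dvd_prime hq).mp h1 with h | h
  · exact orderOf_eq_one_iff.mp h
  · exact absurd ((Nat.prime_dvd_prime_iff_eq hq hp).mp
      (hq.dvd_of_dvd_pow (h ▸ h2))) hne

lemma pow_mul_swap {a b : P} (h : ∀ g : P, Commute ⁅b, a⁆ g) (m : ℕ) :
    b ^ m * a = a * b ^ m * ⁅b, a⁆ ^ m := by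
  induction m with
  | zero => simp
  | succ m ih =>
    have hba : b * a = ⁅b, a⁆ * (a * b) := by group
    calc b ^ (m + 1) * a = b ^ m * (b * a) := by rw [pow_succ b m]; group
    _ = b ^ m * (⁅b, a⁆ * (a * b)) := by rw [hba]
    _ = (b ^ m * ⁅b, a⁆) * (a * b) := by group
    _ = (⁅b, a⁆ * b ^ m) * (a * b) := by rw [(h (b ^ m)).eq]
    _ = ⁅b, a⁆ * ((b ^ m * a) * b) := by group
    _ = ⁅b, a⁆ * ((a * b ^ m * ⁅b, a⁆ ^ m) * b) := by rw [ih]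
    _ = ⁅b, a⁆ * (a * b ^ m * (⁅b, a⁆ ^ m * b)) := by group
    _ = ⁅b, a⁆ * (a * b ^ m * (b * ⁅b, a⁆ ^ m)) := by rw [((h b).pow_left m).eq]
    _ = (⁅b, a⁆ * (a * b ^ (m + 1))) * ⁅b, a⁆ ^ m := by rw [pow_succ b m]; group
    _ = ((a * b ^ (m + 1)) * ⁅b, a⁆) * ⁅b, a⁆ ^ m := by rw [(h (a * b ^ (m + 1))).eq]
    _ = a * b ^ (m + 1) * ⁅b, a⁆ ^ (m + 1) := by rw [mul_assoc, ← pow_succ' ⁅b, a⁆ m]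

lemma commutator_pow_left' {a b : P} (h : ∀ g : P, Commute ⁅b, a⁆ g) (m : ℕ) :
    ⁅b, a⁆ ^ m = ⁅b ^ m, a⁆ := by
  have h1 : ⁅b ^ m, a⁆ = (b ^ m * a) * (a * b ^ m)⁻¹ := by group
  have h2 : Commute (⁅b, a⁆ ^ m) ((a * b ^ m)⁻¹) := ((h (a * b ^ m)).pow_left m).inv_right
  rw [h1, pow_mul_swap h m]
  calc ⁅b, a⁆ ^ m = (a * b ^ m) * ((a * b ^ m)⁻¹ * ⁅b, a⁆ ^ m) := by group
    _ = (a * b ^ m) * (⁅b, a⁆ ^ m * (a * b ^ m)⁻¹) := by rw [h2.eq]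
    _ = a * b ^ m * ⁅b, a⁆ ^ m * (a * b ^ m)⁻¹ := by group

lemma mul_pow_class2 {a b : P} (h : ∀ g : P, Commute ⁅b, a⁆ g) (m : ℕ) :
    (a * b) ^ m = a ^ m * b ^ m * ⁅b, a⁆ ^ (m.choose 2) := by
  induction m with
  | zero => simp
  | succ m ih =>
    have hch : (m + 1).choose 2 = m.choose 2 + m := by
      rw [Nat.choose_succ_succ, Nat.choose_one_right, Nat.add_comm]
    rw [pow_succ (a*b) m, ih, hch]
    calc a ^ m * b ^ m * ⁅b, a⁆ ^ m.choose 2 * (a * b)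
        = a ^ m * b ^ m * (⁅b, a⁆ ^ m.choose 2 * a) * b := by group
      _ = a ^ m * b ^ m * (a * ⁅b, a⁆ ^ m.choose 2) * b := by
          rw [((h a).pow_left (m.choose 2)).eq]
      _ = a ^ m * ((b ^ m * a) * (⁅b, a⁆ ^ m.choose 2 * b)) := by group
      _ = a ^ m * ((a * b ^ m * ⁅b, a⁆ ^ m) * (b * ⁅b, a⁆ ^ m.choose 2)) := by
          rw [pow_mul_swap h m, ((h b).pow_left (m.choose 2)).eq]
      _ = a ^ (m + 1) * b ^ m * ((⁅b, a⁆ ^ m * b) * ⁅b, a⁆ ^ m.choose 2) := by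
          rw [pow_succ a m]; group
      _ = a ^ (m + 1) * b ^ m * ((b * ⁅b, a⁆ ^ m) * ⁅b, a⁆ ^ m.choose 2) := by
          rw [((h b).pow_left m).eq]
      _ = a ^ (m + 1) * b ^ (m + 1) * (⁅b, a⁆ ^ m * ⁅b, a⁆ ^ m.choose 2) := by
          rw [pow_succ b m]; group
      _ = a ^ (m + 1) * b ^ (m + 1) * ⁅b, a⁆ ^ (m.choose 2 + m) := by
          rw [← pow_add ⁅b, a⁆ m (m.choose 2), Nat.add_comm m (m.choose 2)]

lemma lcs_map_eq (e : P ≃* P) (n : ℕ) :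
    (Subgroup.lowerCentralSeries (⊤ : Subgroup P) n).map e.toMonoidHom = Subgroup.lowerCentralSeries (⊤ : Subgroup P) n := by
  induction n with
  | zero =>
    simpa using Subgroup.map_top_of_surjective e.toMonoidHom e.surjective
  | succ n ih =>
    show (⁅Subgroup.lowerCentralSeries (⊤ : Subgroup P) n, ⊤⁆ : Subgroup P).map e.toMonoidHom =
      ⁅Subgroup.lowerCentralSeries (⊤ : Subgroup P) n, (⊤ : Subgroup P)⁆
    rw [Subgroup.map_commutator, ih,
      Subgroup.map_top_of_surjective e.toMonoidHom e.surjective]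

def fixedSub {G : Type*} [Group G] (α : MulAut G) : Subgroup G where
  carrier := {z | α z = z}
  one_mem' := map_one α
  mul_mem' := fun {a b} ha hb => by
    simp only [Set.mem_setOf_eq] at *
    rw [map_mul, ha, hb]
  inv_mem' := fun {a} ha => by
    simp only [Set.mem_setOf_eq] at *
    rw [map_inv, ha]

end Helpers
universe u

theorem thmB {p q : ℕ} (hp : p.Prime) (hq : q.Prime) (hne : q ≠ p) :
    ∀ (n : ℕ) (P : Type u) (instG : Group P) (instF : Finite P), Nat.card P ≤ n →
      IsPGroup p P → ∀ (α : MulAut P), α ^ q = 1 →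
      (∀ x : P, x ^ (if p = 2 then 4 else p) = 1 → α x = x) → α = 1 := by
  intro n
  induction n with
  | zero =>
    intro P instG instF hcard hP α hαq hfixΩ
    have : 0 < Nat.card P := Nat.card_pos
    omega
  | succ n IH =>
    intro P instG instF hcard hP α hαq hfixΩ
    haveI : Fact p.Prime := ⟨hp⟩
    have hq1 : 1 ≤ q := hq.pos
    by_contra hα1
    obtain ⟨x₀, hx₀⟩ : ∃ x : P, α x ≠ x := by
      by_contra h
      push_neg at h
      exact hα1 (MulEquiv.ext h)
    have hnt : Nontrivial P := ⟨⟨x₀, 1, fun h => hx₀ (by rw [h, map_one])⟩⟩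
    have cord : ∀ c : P, c ^ q = 1 → c = 1 := fun c hc =>
      pgroup_q_pow_eq_one hp hq hne hP hc
    have hq_app : ∀ g : P, (α ^ q) g = g := fun g => by rw [hαq]; rfl
    have hpow_app : ∀ (k : ℕ) (g : P), (α ^ (k + 1)) g = α ((α ^ k) g) := fun k g => by
      rw [pow_succ' α k]; rfl
    have hstab : ∀ g c : P, α g = g * c → α c = c → c = 1 := by
      intro g c hg hc
      have hk : ∀ k : ℕ, (α ^ k) g = g * c ^ k := by
        intro k
        induction k with
        | zero => simp
        | succ k ih =>
          rw [hpow_app, ih, map_mul, map_pow, hg, hc, mul_assoc, ← pow_succ' c k]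
      have h2 := hk q
      rw [hq_app] at h2
      exact cord c (left_eq_mul.mp h2)
    -- restriction to proper invariant subgroups
    have hsmall : ∀ H : Subgroup P, H ≠ ⊤ → (∀ z : P, z ∈ H ↔ α z ∈ H) →
        ∀ z ∈ H, α z = z := by
      intro H hHne hHinv z hz
      let β : ↥H ≃* ↥H :=
        { toFun := fun w => ⟨α w, (hHinv w).mp w.2⟩
          invFun := fun w => ⟨α.symm w, (hHinv _).mpr (by simpa using w.2)⟩
          left_inv := fun w => Subtype.ext (by simp)
          right_inv := fun w => Subtype.ext (by simp)
          map_mul' := fun w₁ w₂ => Subtype.ext (by simp) }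
      have hβ : ∀ (k : ℕ) (w : ↥H), ((β ^ k) w : P) = (α ^ k) (w : P) := by
        intro k
        induction k with
        | zero => intro w; rfl
        | succ k ih =>
          intro w
          rw [pow_succ' β k, pow_succ' α k]
          show ((β ((β ^ k) w) : P)) = α ((α ^ k) (w : P))
          rw [← ih w]
          rfl
      have hcard2 : Nat.card ↥H < Nat.card P := by
        refine lt_of_le_of_ne (Nat.card_le_card_of_injective _ H.subtype_injective) ?_
        intro hEq
        exact hHne (Subgroup.eq_top_of_card_eq H hEq)
      have hβq : β ^ q = 1 := by
        apply MulEquiv.ext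
        intro w
        apply Subtype.ext
        rw [hβ q w, hq_app]
        rfl
      have hβfix : ∀ w : ↥H, w ^ (if p = 2 then 4 else p) = 1 → β w = w := by
        intro w hw
        apply Subtype.ext
        show α (w : P) = (w : P)
        apply hfixΩ
        have : ((w ^ (if p = 2 then 4 else p) : ↥H) : P) = ((w : P)) ^ (if p = 2 then 4 else p) := by
          push_cast
          rfl
        rw [← this, hw]
        rfl
      have hβ1 : β = 1 := IH ↥H _ inferInstance (by omega) (hP.to_subgroup H) β hβq hβfix
      have h3 : β ⟨z, hz⟩ = ⟨z, hz⟩ := by rw [hβ1]; rfl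
      exact congrArg Subtype.val h3
    -- the fixed-point subgroup C
    let C : Subgroup P :=
      { carrier := {z : P | α z = z}
        one_mem' := map_one α
        mul_mem' := fun {a b} ha hb => by
          simp only [Set.mem_setOf_eq] at *
          rw [map_mul, ha, hb]
        inv_mem' := fun {a} ha => by
          simp only [Set.mem_setOf_eq] at *
          rw [map_inv, ha] }
    have hmemC : ∀ z : P, z ∈ C ↔ α z = z := fun z => Iff.rfl
    have hCinv : ∀ z : P, z ∈ C ↔ α z ∈ C := by
      intro z
      constructor
      · intro h; rw [hmemC] at *; rw [h]; exact h
      · intro h; rw [hmemC] at *; exact α.injective h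
    have hCne : C ≠ ⊤ := by
      intro h
      exact hx₀ ((hmemC x₀).mp (h ▸ Subgroup.mem_top x₀))
    have hsub : ∀ H : Subgroup P, H ≠ ⊤ → (∀ z : P, z ∈ H ↔ α z ∈ H) → H ≤ C :=
      fun H h1 h2 z hz => (hmemC z).mpr (hsmall H h1 h2 z hz)
    have hx₀C : x₀ ∉ C := fun h => hx₀ ((hmemC x₀).mp h)
    -- C is normal
    haveI hnil : Group.IsNilpotent P := hP.isNilpotent
    have hCnorm : C.Normal := by
      rw [← Subgroup.normalizer_eq_top_iff]
      by_contra hNne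
      have hNinv0 : ∀ (e : MulAut P), (∀ z : P, z ∈ C ↔ e z ∈ C) →
          ∀ z ∈ Subgroup.normalizer (C : Set P), e z ∈ Subgroup.normalizer (C : Set P) := by
        intro e he z hz
        rw [Subgroup.mem_normalizer_iff] at *
        intro y
        constructor
        · intro hy
          have h1 : e.symm y ∈ C := by
            rw [he (e.symm y)]
            simpa using hy
          have h2 := (hz (e.symm y)).mp h1
          have h3 := (he _).mp h2
          simpa [mul_assoc] using h3
        · intro hy
          have h3 : e (z * e.symm y * z⁻¹) ∈ C := by
            simpa [mul_assoc] using hy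
          have h2 : z * e.symm y * z⁻¹ ∈ C := (he _).mpr h3
          have h1 := (hz (e.symm y)).mpr h2
          rw [he (e.symm y)] at h1
          simpa using h1
      have hNinv : ∀ z : P, z ∈ Subgroup.normalizer (C : Set P) ↔ α z ∈ Subgroup.normalizer (C : Set P) := by
        intro z
        constructor
        · exact hNinv0 α hCinv z
        · intro h
          have hCinv' : ∀ w : P, w ∈ C ↔ α⁻¹ w ∈ C := by
            intro w
            rw [hCinv (α⁻¹ w)]
            simp
          have := hNinv0 α⁻¹ (fun w => hCinv' w) (α z) h
          simpa using this
      have h1 : Subgroup.normalizer (C : Set P) ≤ C := hsub _ hNne hNinv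
      have h2 : Subgroup.normalizer (C : Set P) = C := le_antisymm h1 Subgroup.le_normalizer
      have hcond := normalizerCondition_of_isNilpotent (G := P)
      have h3 := hcond C (lt_top_iff_ne_top.mpr hCne)
      rw [h2] at h3
      exact lt_irrefl _ h3
    haveI := hCnorm
    -- Key fact: g⁻¹ * α g ∈ C → g ∈ C
    have hH₁ : ∀ g : P, g⁻¹ * α g ∈ C → g ∈ C := by
      intro g hg
      let H₁ : Subgroup P :=
        { carrier := {z : P | z⁻¹ * α z ∈ C}
          one_mem' := by simp [hmemC]
          mul_mem' := by
            intro a b ha hb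
            simp only [Set.mem_setOf_eq] at *
            have : (a * b)⁻¹ * α (a * b) = (b⁻¹ * (a⁻¹ * α a) * b⁻¹⁻¹) * (b⁻¹ * α b) := by
              rw [map_mul]; group
            rw [this]
            exact C.mul_mem (hCnorm.conj_mem _ ha b⁻¹) hb
          inv_mem' := by
            intro a ha
            simp only [Set.mem_setOf_eq] at *
            have : (a⁻¹)⁻¹ * α a⁻¹ = a * (a⁻¹ * α a)⁻¹ * a⁻¹ := by
              rw [map_inv]; group
            rw [this]
            exact hCnorm.conj_mem _ (C.inv_mem ha) a }
      have hH₁inv : ∀ z : P, z ∈ H₁ ↔ α z ∈ H₁ := by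
        intro z
        have h1 : (α z)⁻¹ * α (α z) = α (z⁻¹ * α z) := by rw [map_mul, map_inv]
        constructor
        · intro h
          show (α z)⁻¹ * α (α z) ∈ C
          rw [h1]
          exact (hCinv _).mp h
        · intro h
          show z⁻¹ * α z ∈ C
          rw [hCinv]
          rw [← h1]
          exact h
      have hH₁ne : H₁ ≠ ⊤ := by
        intro htop
        apply hα1
        apply MulEquiv.ext
        intro z
        have hzH : z ∈ H₁ := by rw [htop]; exact Subgroup.mem_top z
        have hz : z⁻¹ * α z ∈ C := hzH
        have h2 : α z = z * (z⁻¹ * α z) := by group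
        have h3 := hstab z (z⁻¹ * α z) h2 ((hmemC _).mp hz)
        rw [h2, h3, mul_one]
        rfl
      exact hsub H₁ hH₁ne hH₁inv hg
    -- lower central series facts
    have hlcsinv : ∀ (m : ℕ) (z : P),
        z ∈ Subgroup.lowerCentralSeries (⊤ : Subgroup P) m ↔ α z ∈ Subgroup.lowerCentralSeries (⊤ : Subgroup P) m := by
      intro m z
      constructor
      · intro h
        rw [← lcs_map_eq (α : P ≃* P) m]
        exact ⟨z, h, rfl⟩
      · intro h
        rw [← lcs_map_eq (α : P ≃* P) m] at h
        obtain ⟨w, hw, hwz⟩ := h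
        have hwz' : w = z := α.injective hwz
        rwa [← hwz']
    have hlcs1ne : Subgroup.lowerCentralSeries (⊤ : Subgroup P) 1 ≠ ⊤ := by
      intro h
      have h' : (⁅(⊤ : Subgroup P), (⊤ : Subgroup P)⁆ : Subgroup P) = ⊤ := h
      obtain ⟨k, hk⟩ := nilpotent_iff_lowerCentralSeries.mp hnil
      have hall : ∀ m : ℕ, Subgroup.lowerCentralSeries (⊤ : Subgroup P) m = ⊤ := by
        intro m
        induction m with
        | zero => exact lowerCentralSeries_zero _
        | succ m ih =>
          show (⁅Subgroup.lowerCentralSeries (⊤ : Subgroup P) m, ⊤⁆ : Subgroup P) = ⊤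
          rw [ih]
          exact h'
      have h2 := hall k
      rw [hk] at h2
      exact absurd h2 bot_ne_top
    have hlcsne : ∀ m : ℕ, 1 ≤ m → Subgroup.lowerCentralSeries (⊤ : Subgroup P) m ≠ ⊤ := by
      intro m hm h
      apply hlcs1ne
      have h1 := lowerCentralSeries_antitone (G := P) ⊤ hm
      rw [h] at h1
      exact top_le_iff.mp h1
    have hlcsfix : ∀ m : ℕ, 1 ≤ m → ∀ z ∈ Subgroup.lowerCentralSeries (⊤ : Subgroup P) m, α z = z :=
      fun m hm => hsmall _ (hlcsne m hm) (hlcsinv m)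
    have hcommmem : ∀ a b : P, ⁅a, b⁆ ∈ Subgroup.lowerCentralSeries (⊤ : Subgroup P) 1 := by
      intro a b
      show ⁅a, b⁆ ∈ (⁅(⊤ : Subgroup P), (⊤ : Subgroup P)⁆ : Subgroup P)
      exact Subgroup.commutator_mem_commutator (Subgroup.mem_top a) (Subgroup.mem_top b)
    have hPcommC : ∀ a b : P, ⁅a, b⁆ ∈ C :=
      fun a b => hsub _ hlcs1ne (hlcsinv 1) (hcommmem a b)
    -- quotient V := P ⧸ C is abelian
    let π : P →* P ⧸ C := QuotientGroup.mk' C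
    have hπsurj : Function.Surjective π := QuotientGroup.mk'_surjective C
    have hkerπ : ∀ z : P, π z = 1 ↔ z ∈ C := by
      intro z
      constructor
      · intro h
        have h2 : z ∈ π.ker := h
        rwa [QuotientGroup.ker_mk'] at h2
      · intro h
        have h2 : z ∈ π.ker := by rw [QuotientGroup.ker_mk']; exact h
        exact h2
    have hVcomm : ∀ u v : P ⧸ C, u * v = v * u := by
      intro u v
      obtain ⟨a, rfl⟩ := hπsurj u
      obtain ⟨b, rfl⟩ := hπsurj v
      have h1 : π ⁅a, b⁆ = 1 := (hkerπ _).mpr (hPcommC a b)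
      rw [map_commutatorElement] at h1
      exact commutatorElement_eq_one_iff_mul_comm.mp h1
    -- every p-th power lies in C
    have hpowC : ∀ g : P, g ^ p ∈ C := by
      let H₂ : Subgroup P :=
        { carrier := {z : P | z ^ p ∈ C}
          one_mem' := by
            simp only [Set.mem_setOf_eq, one_pow]
            exact C.one_mem
          mul_mem' := by
            intro a b ha hb
            simp only [Set.mem_setOf_eq] at *
            rw [← hkerπ, map_pow, map_mul]
            rw [(Commute.mul_pow (hVcomm (π a) (π b)) p : (π a * π b) ^ p = _)]
            rw [← map_pow, ← map_pow, (hkerπ _).mpr ha, (hkerπ _).mpr hb, one_mul]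
          inv_mem' := by
            intro a ha
            simp only [Set.mem_setOf_eq] at *
            rw [inv_pow]
            exact C.inv_mem ha }
      have hH₂inv : ∀ z : P, z ∈ H₂ ↔ α z ∈ H₂ := by
        intro z
        show z ^ p ∈ C ↔ (α z) ^ p ∈ C
        rw [← map_pow]
        exact hCinv _
      by_cases hH₂top : H₂ = ⊤
      · intro g
        have hg : g ∈ H₂ := by rw [hH₂top]; trivial
        exact hg
      · exfalso
        have hle := hsub H₂ hH₂top hH₂inv
        obtain ⟨g, hg⟩ : ∃ g : P, g ∉ C := by
          by_contra h
          push_neg at h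
          exact hCne (Subgroup.eq_top_iff' C |>.mpr h)
        have hv : π g ≠ 1 := fun h => hg ((hkerπ g).mp h)
        have hQp : IsPGroup p (P ⧸ C) := hP.to_quotient C
        obtain ⟨k, hk⟩ := hQp (π g)
        have hm1 : orderOf (π g) ∣ p ^ k := orderOf_dvd_of_pow_eq_one hk
        obtain ⟨j, hjk, hj⟩ := (Nat.dvd_prime_pow hp).mp hm1
        have hj1 : 1 ≤ j := by
          rcases Nat.eq_zero_or_pos j with h0 | h1
          · exfalso
            rw [h0, pow_zero] at hj
            exact hv (orderOf_eq_one_iff.mp hj)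
          · exact h1
        set w : P ⧸ C := (π g) ^ (p ^ (j - 1)) with hw
        have hwne : w ≠ 1 := by
          intro h
          have hd : orderOf (π g) ∣ p ^ (j - 1) := orderOf_dvd_of_pow_eq_one h
          rw [hj] at hd
          have := Nat.pow_dvd_pow_iff_le_right hp.one_lt |>.mp hd
          omega
        have hwp : w ^ p = 1 := by
          rw [hw, ← pow_mul, ← pow_succ]
          have : j - 1 + 1 = j := by omega
          rw [this, ← hj]
          exact pow_orderOf_eq_one _
        obtain ⟨g', hg'⟩ := hπsurj w
        have hg'H₂ : g' ∈ H₂ := by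
          show g' ^ p ∈ C
          rw [← hkerπ, map_pow, hg', hwp]
        exact hwne (by rw [← hg']; exact (hkerπ _).mpr (hle hg'H₂))
    -- the α-orbit of x₀
    let x : ℕ → P := fun k => (α ^ k) x₀
    have hx0 : x 0 = x₀ := rfl
    have hxsucc : ∀ k : ℕ, x (k + 1) = α (x k) := fun k => hpow_app k x₀
    have hxper : ∀ k : ℕ, x (k + q) = x k := by
      intro k
      show (α ^ (k + q)) x₀ = (α ^ k) x₀
      rw [pow_add, hαq, mul_one]
    have hxC : ∀ k : ℕ, x k ∉ C := by
      intro k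
      induction k with
      | zero => exact hx₀C
      | succ k ih =>
        intro h
        rw [hxsucc k] at h
        exact ih ((hCinv (x k)).mpr h)
    -- the orbit generates P
    have hup : ∀ k : ℕ, ∃ m : ℕ, α (x k) = x m := fun k => ⟨k + 1, (hxsucc k).symm⟩
    have hdown : ∀ k : ℕ, ∃ m : ℕ, x k = α (x m) := by
      intro k
      cases k with
      | zero =>
        refine ⟨q - 1, ?_⟩
        rw [← hxsucc (q - 1), (by omega : q - 1 + 1 = q)]
        have h2 := hxper 0
        rw [Nat.zero_add] at h2
        exact h2.symm
      | succ k => exact ⟨k, hxsucc k⟩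
    have htopx : Subgroup.closure (Set.range x) = ⊤ := by
      by_contra hne2
      have hmapeq : (Subgroup.closure (Set.range x)).map α.toMonoidHom
          = Subgroup.closure (Set.range x) := by
        rw [MonoidHom.map_closure]
        congr 1
        ext z
        constructor
        · rintro ⟨w, ⟨k, rfl⟩, rfl⟩
          obtain ⟨m, hm⟩ := hup k
          exact ⟨m, by rw [← hm]; rfl⟩
        · rintro ⟨k, rfl⟩
          obtain ⟨m, hm⟩ := hdown k
          exact ⟨x m, ⟨m, rfl⟩, hm.symm⟩
      have hinv2 : ∀ z : P, z ∈ Subgroup.closure (Set.range x) ↔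
          α z ∈ Subgroup.closure (Set.range x) := by
        intro z
        constructor
        · intro h
          rw [← hmapeq]
          exact ⟨z, h, rfl⟩
        · intro h
          rw [← hmapeq] at h
          obtain ⟨w, hw, hwz⟩ := h
          rwa [← α.injective hwz]
      exact hxC 0 (hsub _ hne2 hinv2 (Subgroup.subset_closure ⟨0, rfl⟩))
    -- the "norm" element
    let nrm : ℕ → P := fun k => ((List.range q).map (fun j => x (k + j))).prod
    have hnrma : ∀ k : ℕ, α (nrm k) = nrm (k + 1) := by
      intro k
      show α (((List.range q).map (fun j => x (k + j))).prod) = _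
      rw [map_list_prod α, List.map_map]
      have hfeq : (⇑α ∘ fun j => x (k + j)) = fun j => x (k + 1 + j) := by
        funext j
        show α (x (k + j)) = x (k + 1 + j)
        rw [← hxsucc (k + j)]
        congr 1
        omega
      rw [hfeq]
    have hnrm_split : ∀ k : ℕ,
        nrm k = x k * ((List.range (q - 1)).map (fun j => x (k + 1 + j))).prod := by
      intro k
      show ((List.range q).map (fun j => x (k + j))).prod = _
      conv_lhs => rw [show q = (q - 1) + 1 by omega]
      rw [List.range_succ_eq_map, List.map_cons, List.prod_cons, List.map_map]
      have hfeq : ((fun j => x (k + j)) ∘ Nat.succ) = fun j => x (k + 1 + j) := by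
        funext j
        show x (k + (j + 1)) = x (k + 1 + j)
        congr 1
        omega
      rw [hfeq, Nat.add_zero]
    have hnrm_split2 : ∀ k : ℕ,
        nrm (k + 1) = ((List.range (q - 1)).map (fun j => x (k + 1 + j))).prod * x k := by
      intro k
      show ((List.range q).map (fun j => x (k + 1 + j))).prod = _
      conv_lhs => rw [show q = (q - 1) + 1 by omega]
      rw [List.range_succ, List.map_append, List.prod_append, List.map_singleton,
        List.prod_singleton]
      congr 1
      have h3 : k + 1 + (q - 1) = k + q := by omega
      rw [h3, hxper]
    have hnrmconj : ∀ k : ℕ, nrm (k + 1) = (x k)⁻¹ * nrm k * x k := by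
      intro k
      rw [hnrm_split2 k, hnrm_split k]
      group
    have hnrmC : ∀ k : ℕ, nrm k ∈ C := by
      have h1 : π (nrm 1) = π (nrm 0) := by
        have h2 := hnrmconj 0
        rw [Nat.zero_add] at h2
        rw [h2, map_mul, map_mul, map_inv]
        have h3 := hVcomm (π (nrm 0)) (π (x 0))
        rw [mul_assoc, h3, inv_mul_cancel_left]
      have h0 : nrm 0 ∈ C := by
        apply hH₁
        rw [← hkerπ, map_mul, map_inv]
        have h4 := hnrma 0
        rw [Nat.zero_add] at h4
        rw [h4, h1]
        simp
      intro k
      induction k with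
      | zero => exact h0
      | succ k ih =>
        rw [← hnrma k]
        exact (hCinv _).mp ih
    have hnrm_eq : ∀ k : ℕ, nrm k = nrm 0 := by
      intro k
      induction k with
      | zero => rfl
      | succ k ih =>
        rw [← hnrma k, (hmemC _).mp (hnrmC k), ih]
    have hnrm_comm : ∀ g : P, Commute (nrm 0) g := by
      have hx_comm : ∀ k : ℕ, x k ∈ Subgroup.centralizer {nrm 0} := by
        intro k
        rw [Subgroup.mem_centralizer_iff]
        intro g hg
        rw [Set.mem_singleton_iff] at hg
        subst hg
        have h1 := hnrmconj k
        rw [hnrm_eq (k + 1), hnrm_eq k] at h1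
        conv_rhs => rw [h1]
        group
      intro g
      have hle3 : Subgroup.closure (Set.range x) ≤ Subgroup.centralizer {nrm 0} := by
        rw [Subgroup.closure_le]
        rintro z ⟨k, rfl⟩
        exact hx_comm k
      have hgmem : g ∈ Subgroup.centralizer {nrm 0} :=
        hle3 (htopx ▸ Subgroup.mem_top g)
      rw [Subgroup.mem_centralizer_iff] at hgmem
      exact hgmem (nrm 0) rfl
    -- P has nilpotency class at most 2
    have hclass2 : ∀ a b g : P, ⁅⁅a, b⁆, g⁆ = 1 := by
      set N3 : Subgroup P := Subgroup.lowerCentralSeries (⊤ : Subgroup P) 3 with hN3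
      let ρ : P →* P ⧸ N3 := QuotientGroup.mk' N3
      have hρsurj : Function.Surjective ρ := QuotientGroup.mk'_surjective N3
      have hkerρ : ∀ z : P, ρ z = 1 ↔ z ∈ N3 := by
        intro z
        constructor
        · intro h
          have h2 : z ∈ ρ.ker := h
          rwa [QuotientGroup.ker_mk'] at h2
        · intro h
          have h2 : z ∈ ρ.ker := by rw [QuotientGroup.ker_mk']; exact h
          exact h2
      have hQp : IsPGroup p (P ⧸ N3) := hP.to_quotient N3
      have hlcsQ : ∀ m : ℕ,
          Subgroup.lowerCentralSeries (⊤ : Subgroup (P ⧸ N3)) m ≤ (Subgroup.lowerCentralSeries (⊤ : Subgroup P) m).map ρ := by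
        intro m
        induction m with
        | zero =>
          rw [lowerCentralSeries_zero, lowerCentralSeries_zero,
            Subgroup.map_top_of_surjective ρ hρsurj]
        | succ m ih =>
          show (⁅Subgroup.lowerCentralSeries (⊤ : Subgroup (P ⧸ N3)) m, ⊤⁆ : Subgroup (P ⧸ N3)) ≤
            (⁅Subgroup.lowerCentralSeries (⊤ : Subgroup P) m, ⊤⁆ : Subgroup P).map ρ
          rw [Subgroup.map_commutator]
          exact Subgroup.commutator_mono ih
            (by rw [Subgroup.map_top_of_surjective ρ hρsurj])
      have hlcs3Q : Subgroup.lowerCentralSeries (⊤ : Subgroup (P ⧸ N3)) 3 = ⊥ := by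
        have h1 : (Subgroup.lowerCentralSeries (⊤ : Subgroup P) 3).map ρ = ⊥ :=
          (Subgroup.map_eq_bot_iff _).mpr (by rw [QuotientGroup.ker_mk'])
        exact le_bot_iff.mp (h1 ▸ hlcsQ 3)
      have hcentral2Q : ∀ g ∈ Subgroup.lowerCentralSeries (⊤ : Subgroup (P ⧸ N3)) 2, ∀ h : P ⧸ N3,
          Commute g h := by
        intro g hg h
        rw [← commutatorElement_eq_one_iff_commute]
        have h1 : ⁅g, h⁆ ∈ Subgroup.lowerCentralSeries (⊤ : Subgroup (P ⧸ N3)) 3 :=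
          Subgroup.commutator_mem_commutator hg (Subgroup.mem_top h)
        rwa [hlcs3Q, Subgroup.mem_bot] at h1
      have hQtop : Subgroup.closure ((⇑ρ) '' Set.range x) = ⊤ := by
        rw [← MonoidHom.map_closure, htopx, Subgroup.map_top_of_surjective ρ hρsurj]
      have key1 : ∀ i' j' k' : ℕ, ⁅⁅ρ (x i'), ρ (x j')⁆, ρ (x k')⁆ = 1 := by
        intro i' j' k'
        set t : P := ⁅x i', x j'⁆ with ht
        have hαt : α t = t := hlcsfix 1 le_rfl t (hcommmem _ _)
        have hu_mem : ∀ m : ℕ, ⁅t, x m⁆ ∈ Subgroup.lowerCentralSeries (⊤ : Subgroup P) 2 := by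
          intro m
          show ⁅t, x m⁆ ∈ (⁅Subgroup.lowerCentralSeries (⊤ : Subgroup P) 1, ⊤⁆ : Subgroup P)
          exact Subgroup.commutator_mem_commutator (hcommmem _ _) (Subgroup.mem_top _)
        have hαu : ∀ m : ℕ, α ⁅t, x m⁆ = ⁅t, x m⁆ := fun m =>
          hlcsfix 2 (by omega) _ (hu_mem m)
        have husucc : ∀ m : ℕ, ⁅t, x (m + 1)⁆ = ⁅t, x m⁆ := by
          intro m
          have h1 : α ⁅t, x m⁆ = ⁅α t, α (x m)⁆ := by
            simp [commutatorElement_def, map_mul, map_inv]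
          rw [hαu m, hαt, ← hxsucc m] at h1
          exact h1.symm
        have hueq : ∀ m : ℕ, ⁅t, x m⁆ = ⁅t, x 0⁆ := by
          intro m
          induction m with
          | zero => rfl
          | succ m ih => rw [husucc m, ih]
        have hTmem : ρ t ∈ Subgroup.lowerCentralSeries (⊤ : Subgroup (P ⧸ N3)) 1 := by
          show ρ t ∈ (⁅(⊤ : Subgroup (P ⧸ N3)), ⊤⁆ : Subgroup (P ⧸ N3))
          rw [ht, map_commutatorElement]
          exact Subgroup.commutator_mem_commutator (Subgroup.mem_top _) (Subgroup.mem_top _)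
        have hexp : ∀ L : List P,
            ⁅ρ t, (L.map ⇑ρ).prod⁆ = (L.map (fun w => ⁅ρ t, ρ w⁆)).prod := by
          intro L
          induction L with
          | nil => simp
          | cons a L ih =>
            rw [List.map_cons, List.prod_cons, List.map_cons, List.prod_cons]
            have hid : ⁅ρ t, ρ a * (L.map ⇑ρ).prod⁆
                = ⁅ρ t, ρ a⁆ * (ρ a * ⁅ρ t, (L.map ⇑ρ).prod⁆ * (ρ a)⁻¹) := by group
            rw [hid, ih]
            congr 1
            have hmem2 : (L.map (fun w => ⁅ρ t, ρ w⁆)).prod ∈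
                Subgroup.lowerCentralSeries (⊤ : Subgroup (P ⧸ N3)) 2 := by
              apply Subgroup.list_prod_mem
              intro z hz
              rw [List.mem_map] at hz
              obtain ⟨w, _, rfl⟩ := hz
              show ⁅ρ t, ρ w⁆ ∈ (⁅Subgroup.lowerCentralSeries (⊤ : Subgroup (P ⧸ N3)) 1, ⊤⁆ : Subgroup (P ⧸ N3))
              exact Subgroup.commutator_mem_commutator hTmem (Subgroup.mem_top _)
            have h2 : ρ a * (L.map (fun w => ⁅ρ t, ρ w⁆)).prod =
                (L.map (fun w => ⁅ρ t, ρ w⁆)).prod * ρ a :=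
              ((hcentral2Q _ hmem2 (ρ a)).symm).eq
            rw [h2, mul_inv_cancel_right]
        have htn : ⁅t, nrm 0⁆ = 1 :=
          commutatorElement_eq_one_iff_commute.mpr (hnrm_comm t).symm
        have h5 : ⁅ρ t, ρ (nrm 0)⁆ = 1 := by
          have h51 := congrArg ρ htn
          rw [map_commutatorElement, map_one] at h51
          exact h51
        have h6 : ρ (nrm 0) = (((List.range q).map (fun j => x (0 + j))).map ⇑ρ).prod := by
          show ρ (((List.range q).map (fun j => x (0 + j))).prod) = _
          rw [map_list_prod]
        rw [h6, hexp, List.map_map] at h5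
        have h7 : ((fun w => ⁅ρ t, ρ w⁆) ∘ fun j => x (0 + j))
            = fun _ => ⁅ρ t, ρ (x 0)⁆ := by
          funext j
          show ⁅ρ t, ρ (x (0 + j))⁆ = ⁅ρ t, ρ (x 0)⁆
          rw [← map_commutatorElement, ← map_commutatorElement, hueq (0 + j)]
        rw [h7] at h5
        have h8 : ((List.range q).map (fun _ => ⁅ρ t, ρ (x 0)⁆)).prod
            = ⁅ρ t, ρ (x 0)⁆ ^ q := by
          rw [List.map_const', List.prod_replicate, List.length_range]
        rw [h8] at h5
        have h9 : ⁅ρ t, ρ (x 0)⁆ = 1 := pgroup_q_pow_eq_one hp hq hne hQp h5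
        show ⁅⁅ρ (x i'), ρ (x j')⁆, ρ (x k')⁆ = 1
        rw [← map_commutatorElement, ← map_commutatorElement, ← ht, hueq k',
          map_commutatorElement, h9]
      have key2 : ∀ i' j' : ℕ, ⁅ρ (x i'), ρ (x j')⁆ ∈ Subgroup.center (P ⧸ N3) := by
        intro i' j'
        rw [Subgroup.mem_center_iff]
        intro g
        have hle4 : Subgroup.closure ((⇑ρ) '' Set.range x) ≤
            Subgroup.centralizer {⁅ρ (x i'), ρ (x j')⁆} := by
          rw [Subgroup.closure_le]
          rintro z ⟨w, ⟨k', rfl⟩, rfl⟩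
          rw [SetLike.mem_coe, Subgroup.mem_centralizer_iff]
          rintro w hw
          rw [Set.mem_singleton_iff] at hw
          subst hw
          exact commutatorElement_eq_one_iff_mul_comm.mp (key1 i' j' k')
        have h1 := hle4 (hQtop ▸ Subgroup.mem_top g)
        rw [Subgroup.mem_centralizer_iff] at h1
        exact (h1 _ rfl).symm
      have key3 : ∀ u v : P ⧸ N3, ⁅u, v⁆ ∈ Subgroup.center (P ⧸ N3) := by
        set Z := Subgroup.center (P ⧸ N3) with hZ
        let σ : (P ⧸ N3) →* (P ⧸ N3) ⧸ Z := QuotientGroup.mk' Z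
        have hσsurj : Function.Surjective σ := QuotientGroup.mk'_surjective Z
        have hkerσ : ∀ z, σ z = 1 ↔ z ∈ Z := by
          intro z
          constructor
          · intro h
            have h2 : z ∈ σ.ker := h
            rwa [QuotientGroup.ker_mk'] at h2
          · intro h
            have h2 : z ∈ σ.ker := by rw [QuotientGroup.ker_mk']; exact h
            exact h2
        have hRtop : Subgroup.closure ((⇑σ) '' ((⇑ρ) '' Set.range x)) = ⊤ := by
          rw [← MonoidHom.map_closure, hQtop, Subgroup.map_top_of_surjective σ hσsurj]
        have hpair : ∀ s₁ ∈ (⇑σ) '' ((⇑ρ) '' Set.range x),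
            ∀ s₂ ∈ (⇑σ) '' ((⇑ρ) '' Set.range x), s₁ * s₂ = s₂ * s₁ := by
          rintro s₁ ⟨w₁, ⟨w₁', ⟨i', rfl⟩, rfl⟩, rfl⟩ s₂ ⟨w₂, ⟨w₂', ⟨j', rfl⟩, rfl⟩, rfl⟩
          rw [← commutatorElement_eq_one_iff_mul_comm, ← map_commutatorElement]
          exact (hkerσ _).mpr (key2 _ _)
        have habel : ∀ r ∈ Subgroup.closure ((⇑σ) '' ((⇑ρ) '' Set.range x)),
            ∀ s ∈ Subgroup.closure ((⇑σ) '' ((⇑ρ) '' Set.range x)), r * s = s * r := by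
          have hstep1 : Subgroup.closure ((⇑σ) '' ((⇑ρ) '' Set.range x)) ≤
              Subgroup.centralizer ((⇑σ) '' ((⇑ρ) '' Set.range x)) := by
            rw [Subgroup.closure_le]
            intro s hs
            rw [SetLike.mem_coe, Subgroup.mem_centralizer_iff]
            intro w hw
            exact hpair w hw s hs
          intro r hr s hs
          have hstep2 : Subgroup.closure ((⇑σ) '' ((⇑ρ) '' Set.range x)) ≤
              Subgroup.centralizer {r} := by
            rw [Subgroup.closure_le]
            intro w hw
            rw [SetLike.mem_coe, Subgroup.mem_centralizer_iff]
            rintro w' hw'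
            rw [Set.mem_singleton_iff] at hw'
            subst hw'
            have := hstep1 hr
            rw [Subgroup.mem_centralizer_iff] at this
            exact (this w hw).symm
          have h1 := hstep2 hs
          rw [Subgroup.mem_centralizer_iff] at h1
          exact h1 r rfl
        intro u v
        rw [← hkerσ]
        rw [map_commutatorElement, commutatorElement_eq_one_iff_mul_comm]
        exact habel (σ u) (hRtop ▸ Subgroup.mem_top (σ u))
          (σ v) (hRtop ▸ Subgroup.mem_top (σ v))
      have hle23 : Subgroup.lowerCentralSeries (⊤ : Subgroup P) 2 ≤ Subgroup.lowerCentralSeries (⊤ : Subgroup P) 3 := by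
        show (⁅Subgroup.lowerCentralSeries (⊤ : Subgroup P) 1, ⊤⁆ : Subgroup P) ≤ N3
        rw [Subgroup.commutator_le]
        intro g hg h _
        apply (hkerρ _).mp
        rw [map_commutatorElement]
        have h1 : ρ g ∈ Subgroup.lowerCentralSeries (⊤ : Subgroup (P ⧸ N3)) 1 :=
          lowerCentralSeries.map ρ 1 ⟨g, hg, rfl⟩
        have h2 : Subgroup.lowerCentralSeries (⊤ : Subgroup (P ⧸ N3)) 1 ≤ Subgroup.center (P ⧸ N3) := by
          show (⁅(⊤ : Subgroup (P ⧸ N3)), ⊤⁆ : Subgroup (P ⧸ N3)) ≤ _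
          rw [Subgroup.commutator_le]
          intro u _ v _
          exact key3 u v
        have h3 := h2 h1
        rw [Subgroup.mem_center_iff] at h3
        rw [commutatorElement_eq_one_iff_mul_comm]
        exact (h3 (ρ h)).symm
      have hstable : ∀ m : ℕ, Subgroup.lowerCentralSeries (⊤ : Subgroup P) (2 + m) = Subgroup.lowerCentralSeries (⊤ : Subgroup P) 2 := by
        intro m
        induction m with
        | zero => rfl
        | succ m ih =>
          show (⁅Subgroup.lowerCentralSeries (⊤ : Subgroup P) (2 + m), ⊤⁆ : Subgroup P) = Subgroup.lowerCentralSeries (⊤ : Subgroup P) 2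
          rw [ih]
          exact le_antisymm (lowerCentralSeries_antitone ⊤ (by omega : 2 ≤ 3)) hle23
      have hlcs2bot : Subgroup.lowerCentralSeries (⊤ : Subgroup P) 2 = ⊥ := by
        obtain ⟨k, hk⟩ := nilpotent_iff_lowerCentralSeries.mp hnil
        have h5 : Subgroup.lowerCentralSeries (⊤ : Subgroup P) (2 + k) ≤ ⊥ := by
          rw [← hk]
          exact lowerCentralSeries_antitone ⊤ (by omega)
        rw [hstable k] at h5
        exact le_bot_iff.mp h5
      intro a b g
      have h6 : ⁅⁅a, b⁆, g⁆ ∈ Subgroup.lowerCentralSeries (⊤ : Subgroup P) 2 :=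
        Subgroup.commutator_mem_commutator (hcommmem a b) (Subgroup.mem_top g)
      rwa [hlcs2bot, Subgroup.mem_bot] at h6
    -- final contradiction
    have hx1 : x 1 = α (x 0) := by
      have h := hxsucc 0
      rwa [Nat.zero_add] at h
    set y : P := x 0 * (x 1)⁻¹ with hy
    have hyC : y ∉ C := by
      intro hyC'
      apply hxC 0
      apply hH₁
      have h1 : α (x 0) = y⁻¹ * x 0 := by
        rw [hy, ← hx1]
        group
      have h2 : (x 0)⁻¹ * α (x 0) = (x 0)⁻¹ * y⁻¹ * ((x 0)⁻¹)⁻¹ := by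
        rw [h1]
        group
      rw [h2]
      exact hCnorm.conj_mem _ (C.inv_mem hyC') (x 0)⁻¹
    have hs : (x 1) ^ p = (x 0) ^ p := by
      have h1 := (hmemC _).mp (hpowC (x 0))
      rw [map_pow, ← hx1] at h1
      exact h1
    have hccomm : ∀ g : P, Commute ⁅(x 1)⁻¹, x 0⁆ g := fun g =>
      commutatorElement_eq_one_iff_commute.mp (hclass2 _ _ g)
    have hcp : ⁅(x 1)⁻¹, x 0⁆ ^ p = 1 := by
      rw [commutator_pow_left' hccomm p, inv_pow, hs]
      exact commutatorElement_eq_one_iff_commute.mpr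
        (((Commute.refl (x 0)).pow_left p).inv_left)
    have hyfix : α y = y := by
      apply hfixΩ
      by_cases hp2 : p = 2
      · subst hp2
        rw [if_pos rfl]
        have e1 : (x 1) ^ 4 = (x 0) ^ 4 := by
          have h4 : ∀ z : P, z ^ 4 = (z ^ 2) ^ 2 := fun z => by rw [← pow_mul]
          rw [h4, h4, hs]
        have e2 : ⁅(x 1)⁻¹, x 0⁆ ^ (Nat.choose 4 2) = 1 := by
          have h5 : Nat.choose 4 2 = 2 * 3 := by decide
          rw [h5, pow_mul, hcp, one_pow]
        rw [mul_pow_class2 hccomm 4, inv_pow, e1, e2]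
        simp
      · rw [if_neg hp2]
        have h2dvd : 2 ∣ (p - 1) := by
          obtain ⟨m, hm⟩ := hp.odd_of_ne_two hp2
          omega
        have hch : p.choose 2 = p * ((p - 1) / 2) := by
          rw [Nat.choose_two_right, Nat.mul_div_assoc p h2dvd]
        rw [mul_pow_class2 hccomm p, inv_pow, hs, hch, pow_mul, hcp, one_pow]
        simp
    exact hyC ((hmemC y).mpr hyfix)


/-- Restriction of the theorem to an invariant subgroup. -/
lemma restrict_fix {G : Type*} [Group G] [Finite G] {p q : ℕ} (hp : p.Prime) (hq : q.Prime)
    (hne : q ≠ p) (hG : IsPGroup p G) (α : MulAut G) (hαq : α ^ q = 1)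
    (K : Subgroup G) (hKinv : ∀ g : G, g ∈ K ↔ α g ∈ K)
    (hfixK : ∀ g ∈ K, g ^ (if p = 2 then 4 else p) = 1 → α g = g) :
    ∀ g ∈ K, α g = g := by
  intro g hg
  let β : ↥K ≃* ↥K :=
    { toFun := fun w => ⟨α w, (hKinv w).mp w.2⟩
      invFun := fun w => ⟨α.symm w, (hKinv _).mpr (by simpa using w.2)⟩
      left_inv := fun w => Subtype.ext (by simp)
      right_inv := fun w => Subtype.ext (by simp)
      map_mul' := fun w₁ w₂ => Subtype.ext (by simp) }
  have hβ : ∀ (k : ℕ) (w : ↥K), ((β ^ k) w : G) = (α ^ k) (w : G) := by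
    intro k
    induction k with
    | zero => intro w; rfl
    | succ k ih =>
      intro w
      rw [pow_succ' β k, pow_succ' α k]
      show ((β ((β ^ k) w) : G)) = α ((α ^ k) (w : G))
      rw [← ih w]
      rfl
  have hβq : β ^ q = 1 := by
    apply MulEquiv.ext
    intro w
    apply Subtype.ext
    rw [hβ q w, hαq]
    rfl
  have hβfix : ∀ w : ↥K, w ^ (if p = 2 then 4 else p) = 1 → β w = w := by
    intro w hw
    apply Subtype.ext
    show α (w : G) = (w : G)
    apply hfixK _ w.2
    have h2 : ((w ^ (if p = 2 then 4 else p) : ↥K) : G)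
        = ((w : G)) ^ (if p = 2 then 4 else p) := by
      push_cast
      rfl
    rw [← h2, hw]
    rfl
  have hβ1 : β = 1 :=
    thmB hp hq hne (Nat.card ↥K) ↥K inferInstance inferInstance le_rfl
      (hG.to_subgroup K) β hβq hβfix
  have h3 : β ⟨g, hg⟩ = ⟨g, hg⟩ := by rw [hβ1]; rfl
  exact congrArg Subtype.val h3

theorem stmt10 {G A : Type*} [Group G] [Group A] [Finite G]
    (p : ℕ) [Fact p.Prime] (hG : IsPGroup p G)
    (φ : A →* MulAut G) (hφ : Function.Injective φ)
    (i : ℕ) (hi : 1 ≤ i)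
    (hfix : ∀ x ∈ gammaGA φ i, x ^ (if p = 2 then 4 else p) = 1 →
      ∀ a : A, (inr a : G ⋊[φ] A) * x * (inr a : G ⋊[φ] A)⁻¹ = x) :
    IsPGroup p A := by
  have hp : p.Prime := Fact.out
  haveI hfinA : Finite A := by
    have hinj : Function.Injective (fun a : A => (φ a : G → G)) := by
      intro a b h
      exact hφ (DFunLike.coe_injective h)
    exact Finite.of_injective _ hinj
  -- main step: no elements of prime order q ≠ p
  have key : ∀ b : A, ∀ q' : ℕ, q'.Prime → q' ≠ p → b ^ q' = 1 → b = 1 := by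
    intro b q' hq' hq'p hbq
    by_contra hb1
    set α : MulAut G := φ b with hα
    have hαq : α ^ q' = 1 := by rw [hα, ← map_pow, hbq, map_one]
    set d : G → G := fun g => g * (α g)⁻¹ with hd
    have hdcomm : ∀ g : G, α (d g) = d (α g) := by
      intro g
      show α (g * (α g)⁻¹) = α g * (α (α g))⁻¹
      rw [map_mul, map_inv]
    have hdit : ∀ (j : ℕ) (g : G), α (d^[j] g) = d^[j] (α g) := by
      intro j
      induction j with
      | zero => intro g; rfl
      | succ j ih =>
        intro g
        rw [Function.iterate_succ_apply, Function.iterate_succ_apply, ih (d g), hdcomm g]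
    have hlnc : ∀ (j : ℕ) (g : G),
        lnc (inl g : G ⋊[φ] A) (List.replicate j (inr b)) = inl (d^[j] g) := by
      intro j
      induction j with
      | zero => intro g; rfl
      | succ j ih =>
        intro g
        rw [List.replicate_succ]
        show lnc (⁅(inl g : G ⋊[φ] A), inr b⁆) (List.replicate j (inr b)) = _
        have hc : (⁅(inl g : G ⋊[φ] A), inr b⁆ : G ⋊[φ] A) = inl (d g) := by
          rw [commutatorElement_def]
          have h1 : ((inl g : G ⋊[φ] A))⁻¹ = inl g⁻¹ := (map_inv inl g).symm
          have h2 : ((inr b : G ⋊[φ] A))⁻¹ = inr b⁻¹ := (map_inv inr b).symm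
          rw [h1, h2, mul_assoc, mul_assoc, ← mul_assoc (inr b : G ⋊[φ] A), ← inl_aut,
            ← map_mul, map_inv]
        rw [hc, ih (d g), ← Function.iterate_succ_apply]
    -- generators lie in gammaGA
    have hgen : ∀ g : G, (inl (d^[i-1] g) : G ⋊[φ] A) ∈ gammaGA φ i := by
      intro g
      apply Subgroup.subset_closure
      refine ⟨g, List.replicate (i-1) (inr b), ?_, ?_, ?_, ?_⟩
      · rw [List.length_replicate]; omega
      · intro y hy
        rw [List.mem_replicate] at hy
        exact Or.inr ⟨b, hy.2⟩
      · refine ⟨Finset.univ, ?_, ?_⟩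
        · simp
        · intro idx _
          exact ⟨b, by simp⟩
      · rw [hlnc (i-1) g]
    set K : Subgroup G := Subgroup.closure (Set.range (d^[i-1])) with hK
    have hKinl : ∀ g ∈ K, (inl g : G ⋊[φ] A) ∈ gammaGA φ i := by
      intro g hg
      have hle : K ≤ (gammaGA φ i).comap (inl : G →* G ⋊[φ] A) := by
        rw [hK, Subgroup.closure_le]
        rintro z ⟨g', rfl⟩
        exact hgen g'
      exact hle hg
    have hfixK : ∀ g ∈ K, g ^ (if p = 2 then 4 else p) = 1 → α g = g := by
      intro g hg hgp
      have hx : ((inl g : G ⋊[φ] A)) ^ (if p = 2 then 4 else p) = 1 := by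
        rw [← map_pow, hgp, map_one]
      have h1 := hfix (inl g) (hKinl g hg) hx b
      rw [← map_inv, ← inl_aut] at h1
      exact inl_injective h1
    have hKinv : ∀ g : G, g ∈ K ↔ α g ∈ K := by
      have hmapeq : K.map α.toMonoidHom = K := by
        rw [hK, MonoidHom.map_closure]
        congr 1
        ext z
        constructor
        · rintro ⟨w, ⟨g', rfl⟩, rfl⟩
          exact ⟨α g', (hdit (i-1) g').symm⟩
        · rintro ⟨g', rfl⟩
          refine ⟨d^[i-1] (α.symm g'), ⟨α.symm g', rfl⟩, ?_⟩
          show α (d^[i-1] (α.symm g')) = d^[i-1] g'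
          rw [hdit (i-1), MulEquiv.apply_symm_apply]
      intro z
      constructor
      · intro h
        rw [← hmapeq]
        exact ⟨z, h, rfl⟩
      · intro h
        rw [← hmapeq] at h
        obtain ⟨w, hw, hwz⟩ := h
        rwa [← α.injective hwz]
    have hfixtop : ∀ g ∈ K, α g = g :=
      restrict_fix hp hq' hq'p hG α hαq K hKinv hfixK
    -- descent
    have hdesc : ∀ (j : ℕ),
        (∀ g ∈ Subgroup.closure (Set.range (d^[j+1])), α g = g) →
        (∀ g ∈ Subgroup.closure (Set.range (d^[j])), α g = g) := by
      intro j hfixj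
      have hgenfix : ∀ g : G, α (d^[j] g) = d^[j] g := by
        intro g
        set z := d^[j] g with hz
        set c := d z with hc
        have hcK : α c = c := by
          apply hfixj c
          apply Subgroup.subset_closure
          exact ⟨g, Function.iterate_succ_apply' d j g⟩
        have hαz : α z = c⁻¹ * z := by
          rw [hc]
          show α z = (z * (α z)⁻¹)⁻¹ * z
          group
        have hk : ∀ k : ℕ, (α ^ k) z = c⁻¹ ^ k * z := by
          intro k
          induction k with
          | zero => simp
          | succ k ih =>
            rw [pow_succ' α k]
            show α ((α ^ k) z) = c⁻¹ ^ (k + 1) * z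
            rw [ih, map_mul, map_pow, map_inv, hcK, hαz, pow_succ]
            group
        have h2 := hk q'
        rw [show (α ^ q') z = z by rw [hαq]; rfl] at h2
        have h3 : c⁻¹ ^ q' = 1 := (right_eq_mul.mp h2)
        have h4 : c = 1 := by
          have h5 := pgroup_q_pow_eq_one hp hq' hq'p hG h3
          rwa [inv_eq_one] at h5
        rw [hαz, h4]
        simp
      intro g hg
      have hle : Subgroup.closure (Set.range (d^[j])) ≤ fixedSub α := by
        rw [Subgroup.closure_le]
        rintro z ⟨g', rfl⟩
        exact hgenfix g'
      exact hle hg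
    have hdescn : ∀ (j : ℕ),
        (∀ g ∈ Subgroup.closure (Set.range (d^[j])), α g = g) → ∀ g : G, α g = g := by
      intro j
      induction j with
      | zero =>
        intro h g
        exact h g (Subgroup.subset_closure ⟨g, rfl⟩)
      | succ j ih =>
        intro h
        exact ih (hdesc j h)
    have hall : ∀ g : G, α g = g := hdescn (i-1) hfixtop
    apply hb1
    apply hφ
    rw [map_one]
    exact MulEquiv.ext hall
  -- conclude A is a p-group
  intro a
  have hord : orderOf a ≠ 0 := (orderOf_pos a).ne'
  have hprimes : ∀ {r : ℕ}, r.Prime → r ∣ orderOf a → r = p := by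
    intro r hr hrd
    by_contra hrp
    have h1 : (a ^ (orderOf a / r)) ^ r = 1 := by
      rw [← pow_mul, Nat.div_mul_cancel hrd, pow_orderOf_eq_one]
    have h2 := key _ r hr hrp h1
    have h3 : orderOf a ∣ orderOf a / r := orderOf_dvd_of_pow_eq_one h2
    have h5 : 0 < orderOf a / r :=
      Nat.div_pos (Nat.le_of_dvd (Nat.pos_of_ne_zero hord) hrd) hr.pos
    have h6 := Nat.le_of_dvd h5 h3
    have h4 : orderOf a / r < orderOf a :=
      Nat.div_lt_self (Nat.pos_of_ne_zero hord) hr.one_lt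
    omega
  refine ⟨(orderOf a).primeFactorsList.length, ?_⟩
  rw [← Nat.eq_prime_pow_of_unique_prime_dvd hord hprimes]
  exact pow_orderOf_eq_one a
end

section
/- Let p be a prime, G a finite p-group, and Q a group of automorphisms of G of order coprime to p. If Q fixes every element of order dividing p (dividing 4 if p = 2) in [G,Q], then Q is trivial. -/
open scoped commutatorElement

universe u

section helpers

variable {G : Type*} [Group G]

lemma comm_pow_right (x y c : G) (hc : y * x = x * y * c) (hcx : Commute c x) :
    ∀ n : ℕ, y * x ^ n = x ^ n * y * c ^ n := by
  intro n
  induction n with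
  | zero => simp
  | succ n ih =>
    have hx : c ^ n * x = x * c ^ n := ((hcx.pow_left n).eq)
    calc y * x ^ (n+1) = (y * x ^ n) * x := by rw [pow_succ, mul_assoc]
      _ = x ^ n * y * (c ^ n * x) := by rw [ih]; group
      _ = x ^ n * (y * x) * c ^ n := by rw [hx]; group
      _ = x ^ n * (x * y * c) * c ^ n := by rw [hc]
      _ = x ^ (n+1) * y * c ^ (n+1) := by rw [pow_succ, pow_succ]; group

lemma comm_pow_left (x y c : G) (hc : y * x = x * y * c) (hcy : Commute c y) :
    ∀ n : ℕ, y ^ n * x = x * y ^ n * c ^ n := by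
  intro n
  induction n with
  | zero => simp
  | succ n ih =>
    calc y ^ (n+1) * x = y * (y ^ n * x) := by rw [pow_succ']; group
      _ = (y * x) * y ^ n * c ^ n := by rw [ih]; group
      _ = x * y * (c * y ^ n) * c ^ n := by rw [hc]; group
      _ = x * y * (y ^ n * c) * c ^ n := by rw [(hcy.pow_right n).eq]
      _ = x * y ^ (n+1) * c ^ (n+1) := by rw [pow_succ', pow_succ]; group

lemma mul_pow_expand (x y c : G) (hc : y * x = x * y * c) (hcx : Commute c x)
    (hcy : Commute c y) : ∀ n : ℕ, (x * y) ^ n = x ^ n * y ^ n * c ^ (n.choose 2) := by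
  intro n
  induction n with
  | zero => simp
  | succ n ih =>
    have h1 : y ^ n * x = x * y ^ n * c ^ n := comm_pow_left x y c hc hcy n
    have hcxn : c ^ (n.choose 2) * x = x * c ^ (n.choose 2) := (hcx.pow_left _).eq
    have hcyn : c ^ (n.choose 2) * y = y * c ^ (n.choose 2) := (hcy.pow_left _).eq
    have hch : (n+1).choose 2 = n.choose 2 + n := by
      rw [Nat.choose_succ_succ, Nat.choose_one_right, Nat.add_comm]
    calc (x*y)^(n+1) = (x*y)^n * (x*y) := pow_succ _ _
      _ = x ^ n * y ^ n * (c ^ (n.choose 2) * x) * y := by rw [ih]; group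
      _ = x ^ n * (y ^ n * x) * (c ^ (n.choose 2) * y) := by rw [hcxn]; group
      _ = x ^ n * (x * y ^ n * c ^ n) * (y * c ^ (n.choose 2)) := by rw [h1, hcyn]
      _ = x ^ (n+1) * y ^ n * (c ^ n * y) * c ^ (n.choose 2) := by
            rw [pow_succ]; group
      _ = x ^ (n+1) * y ^ (n+1) * (c ^ n * c ^ (n.choose 2)) := by
            rw [(hcy.pow_left n).eq, pow_succ]; group
      _ = x ^ (n+1) * y ^ (n+1) * c ^ ((n+1).choose 2) := by
            rw [hch, ← pow_add, Nat.add_comm n (n.choose 2)]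

/-- Restriction of an automorphism to an invariant subgroup. -/
def autRestrict (σ : MulAut G) (M : Subgroup G) (h1 : ∀ x ∈ M, σ x ∈ M)
    (h2 : ∀ x ∈ M, σ.symm x ∈ M) : MulAut M where
  toFun x := ⟨σ x, h1 x x.2⟩
  invFun x := ⟨σ.symm x, h2 x x.2⟩
  left_inv x := Subtype.ext (σ.symm_apply_apply x)
  right_inv x := Subtype.ext (σ.apply_symm_apply x)
  map_mul' x y := Subtype.ext (map_mul σ (x : G) (y : G))

lemma autRestrict_pow (σ : MulAut G) (M : Subgroup G) (h1 : ∀ x ∈ M, σ x ∈ M)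
    (h2 : ∀ x ∈ M, σ.symm x ∈ M) (j : ℕ) (x : M) :
    (((autRestrict σ M h1 h2) ^ j) x : G) = (σ ^ j) (x : G) := by
  induction j with
  | zero => simp
  | succ j ih =>
    rw [pow_succ', pow_succ', MulAut.mul_apply, MulAut.mul_apply]
    have h0 : ((autRestrict σ M h1 h2) (((autRestrict σ M h1 h2) ^ j) x) : G)
        = σ ((((autRestrict σ M h1 h2) ^ j) x) : G) := rfl
    rw [h0, ih]

lemma mulaut_pow_fix (σ : MulAut G) (c : G) (hc : σ c = c) (j : ℕ) : (σ ^ j) c = c := by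
  induction j with
  | zero => rfl
  | succ j ih => rw [pow_succ, MulAut.mul_apply, hc, ih]

lemma commutator_ne_top_of_pgroup [Finite G] [Nontrivial G] {p : ℕ} [Fact p.Prime]
    (hG : IsPGroup p G) : commutator G ≠ ⊤ := by
  intro h
  have hnil := hG.isNilpotent
  obtain ⟨n, hn⟩ := nilpotent_iff_lowerCentralSeries.mp hnil
  have hall : ∀ k, Subgroup.lowerCentralSeries (⊤ : Subgroup G) k = ⊤ := by
    intro k
    induction k with
    | zero => rfl
    | succ k ih =>
      rw [Subgroup.lowerCentralSeries_succ, ih]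
      exact h
  obtain ⟨a, b, hab⟩ := exists_pair_ne G
  have ha : a ∈ (⊥ : Subgroup G) := by rw [← hn, hall]; trivial
  have hb : b ∈ (⊥ : Subgroup G) := by rw [← hn, hall]; trivial
  rw [Subgroup.mem_bot] at ha hb
  exact hab (ha.trans hb.symm)

lemma orderone_of_coprime [Finite G] {p m : ℕ} (hG : IsPGroup p G) (hmc : Nat.Coprime m p)
    (c : G) (hcm : c ^ m = 1) : c = 1 := by
  obtain ⟨j, hj⟩ := hG c
  have h1 : orderOf c ∣ m := orderOf_dvd_of_pow_eq_one hcm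
  have h2 : orderOf c ∣ p ^ j := orderOf_dvd_of_pow_eq_one hj
  have h3 : orderOf c ∣ 1 := by
    have := Nat.dvd_gcd h1 h2
    rwa [Nat.Coprime.gcd_eq_one (hmc.pow_right j)] at this
  rw [Nat.dvd_one] at h3
  exact orderOf_eq_one_iff.mp h3

lemma subgroup_card_lt [Finite G] {M : Subgroup G} (hM : M ≠ ⊤) :
    Nat.card M < Nat.card G := by
  obtain ⟨y, hy⟩ : ∃ y, y ∉ M := by
    by_contra h
    push_neg at h
    exact hM (Subgroup.eq_top_iff' M |>.mpr h)
  have h1 : (M : Set G) ⊂ Set.univ :=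
    ⟨Set.subset_univ _, fun h => hy (h (Set.mem_univ y))⟩
  calc Nat.card M = (M : Set G).ncard := Nat.card_coe_set_eq _
    _ < (Set.univ : Set G).ncard := Set.ncard_lt_ncard h1 Set.finite_univ
    _ = Nat.card G := Set.ncard_univ G

lemma prod_shift {A : Type*} [CommMonoid A] [IsCancelMul A] (f : ℕ → A) (m : ℕ) (h : f m = f 0) :
    ∏ i ∈ Finset.range m, f (i + 1) = ∏ i ∈ Finset.range m, f i := by
  have e1 := Finset.prod_range_succ' f m
  have e2 := Finset.prod_range_succ f m
  rw [h] at e2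
  exact mul_right_cancel (e1.symm.trans e2)

end helpers

theorem auxmain : ∀ (n : ℕ) (G : Type u) [Group G] [Finite G],
    Nat.card G ≤ n → ∀ (p : ℕ) [Fact p.Prime], IsPGroup p G →
    ∀ (σ : MulAut G) (m : ℕ), 0 < m → Nat.Coprime m p → σ ^ m = 1 →
    (∀ x ∈ Subgroup.closure {x : G | ∃ g : G, x = g⁻¹ * σ g},
      x ^ (if p = 2 then 4 else p) = 1 → σ x = x) →
    ∀ g : G, σ g = g := by
  intro n
  induction n with
  | zero =>
    intro G _ _ hn
    exact absurd hn (by have := Nat.card_pos (α := G); omega)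
  | succ n ih =>
    intro G _ _ hn p hp hG σ m hm0 hmc hσm hfix g
    classical
    set k := (if p = 2 then 4 else p) with hkdef
    set S := {x : G | ∃ g : G, x = g⁻¹ * σ g} with hSdef
    set H := Subgroup.closure S with hHdef
    -- σ-invariance of generating set
    have hS_σ : ∀ x ∈ S, σ x ∈ S := by
      rintro x ⟨a, rfl⟩
      exact ⟨σ a, by rw [map_mul, map_inv]⟩
    have hS_σ' : ∀ x ∈ S, σ.symm x ∈ S := by
      rintro x ⟨a, rfl⟩
      exact ⟨σ.symm a, by simp [map_mul]⟩
    -- closure invariance helper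
    have hclos : ∀ (s : Set G) (τ : MulAut G), (∀ x ∈ s, τ x ∈ Subgroup.closure s) →
        ∀ x ∈ Subgroup.closure s, τ x ∈ Subgroup.closure s := by
      intro s τ h x hx
      have hle : Subgroup.closure s ≤ (Subgroup.closure s).comap τ.toMonoidHom :=
        (Subgroup.closure_le _).mpr h
      exact hle hx
    -- key: the induction applies to proper invariant subgroups contained in H
    have key : ∀ (M : Subgroup G), (∀ x ∈ M, σ x ∈ M) → (∀ x ∈ M, σ.symm x ∈ M) →
        M ≠ ⊤ → (∀ x : G, x ∈ M → x ∈ H) → ∀ x ∈ M, σ x = x := by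
      intro M h1 h2 hMt hMH x hx
      have hτm : (autRestrict σ M h1 h2) ^ m = 1 := by
        ext y
        have h3 := autRestrict_pow σ M h1 h2 m y
        rw [hσm] at h3
        simpa using Subtype.ext h3
      have hcard : Nat.card M ≤ n := by
        have := subgroup_card_lt (G := G) hMt; omega
      have hfix' : ∀ z ∈ Subgroup.closure
            {z : ↥M | ∃ h : ↥M, z = h⁻¹ * (autRestrict σ M h1 h2) h},
          z ^ (if p = 2 then 4 else p) = 1 → (autRestrict σ M h1 h2) z = z := by
        intro z _ hzk
        have hz1 : (z : G) ∈ H := hMH z z.2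
        have hzk' : (z : G) ^ k = 1 := by exact_mod_cast congrArg Subtype.val hzk
        exact Subtype.ext (hfix (z : G) hz1 hzk')
      have hres := ih M hcard p (hG.to_subgroup M) (autRestrict σ M h1 h2) m hm0 hmc hτm hfix'
          ⟨x, hx⟩
      exact congrArg Subtype.val hres
    by_cases hH : H = ⊤
    · -- hard case : H = ⊤
      by_contra hg
      haveI : Nontrivial G := ⟨⟨σ g, g, hg⟩⟩
      have hmemH : ∀ x : G, x ∈ H := fun x => hH ▸ Subgroup.mem_top x
      have hcomm_ne : commutator G ≠ ⊤ := commutator_ne_top_of_pgroup hG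
      have hcommσ : ∀ x ∈ commutator G, σ x ∈ commutator G := by
        intro x hx
        rw [commutator_eq_closure] at hx ⊢
        refine hclos _ σ ?_ x hx
        rintro y ⟨a, b, rfl⟩
        exact Subgroup.subset_closure ⟨σ a, σ b, by simp [commutatorElement_def, map_mul]⟩
      have hcommσ' : ∀ x ∈ commutator G, σ.symm x ∈ commutator G := by
        intro x hx
        rw [commutator_eq_closure] at hx ⊢
        refine hclos _ σ.symm ?_ x hx
        rintro y ⟨a, b, rfl⟩
        exact Subgroup.subset_closure
          ⟨σ.symm a, σ.symm b, by simp [commutatorElement_def, map_mul]⟩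
      have hcomm_fix : ∀ x ∈ commutator G, σ x = x :=
        key (commutator G) hcommσ hcommσ' hcomm_ne (fun x _ => hmemH x)
      -- the commutator subgroup is central
      have cent : ∀ c ∈ commutator G, ∀ x : G, c * x = x * c := by
        have hSK : ∀ y ∈ S, y ∈ Subgroup.centralizer ((commutator G : Subgroup G) : Set G) := by
          rintro y ⟨a, rfl⟩
          rw [Subgroup.mem_centralizer_iff]
          intro c hc
          have hc' : c ∈ commutator G := hc
          have hconj : a * c * a⁻¹ ∈ commutator G :=
            Subgroup.Normal.conj_mem inferInstance c hc' a
          have h5 : σ (a * c * a⁻¹) = a * c * a⁻¹ := hcomm_fix _ hconj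
          rw [map_mul, map_mul, map_inv, hcomm_fix c hc'] at h5
          have h6 : a⁻¹ * (σ a * c * (σ a)⁻¹) * a = c := by rw [h5]; group
          calc c * (a⁻¹ * σ a) = (a⁻¹ * (σ a * c * (σ a)⁻¹) * a) * (a⁻¹ * σ a) := by rw [h6]
            _ = (a⁻¹ * σ a) * c := by group
        intro c hc x
        have hx : x ∈ Subgroup.centralizer ((commutator G : Subgroup G) : Set G) := by
          have hle : H ≤ Subgroup.centralizer ((commutator G : Subgroup G) : Set G) :=
            (Subgroup.closure_le _).mpr hSK
          exact hle (hmemH x)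
        exact Subgroup.mem_centralizer_iff.mp hx c hc
      -- the subgroup generated by commutators and p-th powers
      set D := Subgroup.closure (commutatorSet G ∪ {x : G | ∃ a : G, a ^ p = x}) with hDdef
      have hDσ : ∀ x ∈ D, σ x ∈ D := by
        refine hclos _ σ ?_
        rintro y (⟨a, b, rfl⟩ | ⟨a, rfl⟩)
        · exact Subgroup.subset_closure
            (Or.inl ⟨σ a, σ b, by simp [commutatorElement_def, map_mul]⟩)
        · exact Subgroup.subset_closure (Or.inr ⟨σ a, by rw [← map_pow]⟩)
      have hDσ' : ∀ x ∈ D, σ.symm x ∈ D := by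
        refine hclos _ σ.symm ?_
        rintro y (⟨a, b, rfl⟩ | ⟨a, rfl⟩)
        · exact Subgroup.subset_closure
            (Or.inl ⟨σ.symm a, σ.symm b, by simp [commutatorElement_def, map_mul]⟩)
        · exact Subgroup.subset_closure (Or.inr ⟨σ.symm a, by rw [← map_pow]⟩)
      have hpD : ∀ x : G, x ^ p ∈ D := fun x => Subgroup.subset_closure (Or.inr ⟨x, rfl⟩)
      have hD_ne : D ≠ ⊤ := by
        intro htop
        have hrange : ∀ x : G, Abelianization.of x ∈
            (powMonoidHom p : Abelianization G →* Abelianization G).range := by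
          intro x
          have hx : x ∈ D := htop ▸ Subgroup.mem_top x
          rw [hDdef] at hx
          refine Subgroup.closure_induction ?_ ?_ ?_ ?_ hx
          · rintro y (⟨a, b, rfl⟩ | ⟨a, rfl⟩)
            · have h1 : Abelianization.of ⁅a, b⁆ = 1 :=
                (QuotientGroup.eq_one_iff _).mpr
                  (Subgroup.commutator_mem_commutator (Subgroup.mem_top a) (Subgroup.mem_top b))
              rw [h1]; exact one_mem _
            · exact ⟨Abelianization.of a, by rw [powMonoidHom_apply, ← map_pow]⟩
          · exact one_mem _
          · intro a b _ _ ha hb; exact mul_mem ha hb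
          · intro a _ ha; exact inv_mem ha
        have hsurj : Function.Surjective
            (powMonoidHom p : Abelianization G →* Abelianization G) := by
          intro a
          rcases Quot.exists_rep a with ⟨x, rfl⟩
          rw [Abelianization.mk_eq_of]
          exact hrange x
        have hinj := Finite.injective_iff_surjective.mpr hsurj
        obtain ⟨g0, hg0⟩ : ∃ g0 : G, g0 ∉ commutator G := by
          by_contra hh; push_neg at hh
          exact hcomm_ne ((Subgroup.eq_top_iff' _).mpr hh)
        have ha0 : Abelianization.of g0 ≠ 1 := fun h1 => hg0 ((QuotientGroup.eq_one_iff g0).mp h1)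
        obtain ⟨j, hj⟩ := hG g0
        have hex : ∃ j, (Abelianization.of g0) ^ p ^ j = 1 :=
          ⟨j, by rw [← map_pow, hj, map_one]⟩
        have ht := Nat.find_spec hex
        have ht0 : Nat.find hex ≠ 0 := by
          intro h0; rw [h0, pow_zero, pow_one] at ht; exact ha0 ht
        have hmin : ¬ ((Abelianization.of g0) ^ p ^ (Nat.find hex - 1) = 1) :=
          Nat.find_min hex (by omega)
        have heq : (powMonoidHom p : Abelianization G →* Abelianization G)
            ((Abelianization.of g0) ^ p ^ (Nat.find hex - 1))
            = (powMonoidHom p : Abelianization G →* Abelianization G) 1 := by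
          rw [map_one, powMonoidHom_apply, ← pow_mul, ← pow_succ,
            Nat.sub_add_cancel (Nat.one_le_iff_ne_zero.mpr ht0)]
          exact ht
        exact hmin (hinj heq)
      have hD_fix : ∀ x ∈ D, σ x = x := key D hDσ hDσ' hD_ne (fun x _ => hmemH x)
      -- trace argument : fixed points lie in the commutator subgroup
      have hC_le : ∀ c : G, σ c = c → c ∈ commutator G := by
        have htr_mul : ∀ x y : G,
            (∏ i ∈ Finset.range m, Abelianization.of ((σ ^ i) (x * y)))
              = (∏ i ∈ Finset.range m, Abelianization.of ((σ ^ i) x))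
                * (∏ i ∈ Finset.range m, Abelianization.of ((σ ^ i) y)) := by
          intro x y
          rw [← Finset.prod_mul_distrib]
          exact Finset.prod_congr rfl (fun i _ => by rw [map_mul, map_mul])
        have htr_one : (∏ i ∈ Finset.range m, Abelianization.of ((σ ^ i) (1 : G))) = 1 := by
          simp
        have htr_shift : ∀ x : G,
            (∏ i ∈ Finset.range m, Abelianization.of ((σ ^ i) (σ x)))
              = ∏ i ∈ Finset.range m, Abelianization.of ((σ ^ i) x) := by
          intro x
          calc (∏ i ∈ Finset.range m, Abelianization.of ((σ ^ i) (σ x)))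
              = ∏ i ∈ Finset.range m, Abelianization.of ((σ ^ (i + 1)) x) :=
                Finset.prod_congr rfl (fun i _ => by rw [pow_succ, MulAut.mul_apply])
            _ = ∏ i ∈ Finset.range m, Abelianization.of ((σ ^ i) x) :=
                prod_shift (fun i => Abelianization.of ((σ ^ i) x)) m (by
                  show Abelianization.of ((σ ^ m) x) = Abelianization.of ((σ ^ 0) x)
                  rw [hσm, pow_zero])
        have htr_inv : ∀ x : G,
            (∏ i ∈ Finset.range m, Abelianization.of ((σ ^ i) x⁻¹))
              = (∏ i ∈ Finset.range m, Abelianization.of ((σ ^ i) x))⁻¹ := by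
          intro x
          have h := htr_mul x⁻¹ x
          rw [inv_mul_cancel, htr_one] at h
          exact eq_inv_of_mul_eq_one_left h.symm
        have htr_all : ∀ x : G,
            (∏ i ∈ Finset.range m, Abelianization.of ((σ ^ i) x)) = 1 := by
          have hle : H ≤
              { carrier := {x : G | (∏ i ∈ Finset.range m, Abelianization.of ((σ ^ i) x)) = 1}
                one_mem' := htr_one
                mul_mem' := by
                  intro a b ha hb
                  rw [Set.mem_setOf_eq] at ha hb ⊢
                  rw [htr_mul, ha, hb, one_mul]
                inv_mem' := by
                  intro a ha
                  rw [Set.mem_setOf_eq] at ha ⊢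
                  rw [htr_inv, ha, inv_one] } := by
            refine (Subgroup.closure_le _).mpr ?_
            rintro y ⟨a, rfl⟩
            show (∏ i ∈ Finset.range m, Abelianization.of ((σ ^ i) (a⁻¹ * σ a))) = 1
            rw [htr_mul, htr_inv, htr_shift, inv_mul_cancel]
          exact fun x => hle (hmemH x)
        intro c hc
        have h1 : (∏ i ∈ Finset.range m, Abelianization.of ((σ ^ i) c))
            = (Abelianization.of c) ^ m := by
          calc (∏ i ∈ Finset.range m, Abelianization.of ((σ ^ i) c))
              = ∏ _i ∈ Finset.range m, Abelianization.of c :=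
                Finset.prod_congr rfl (fun i _ => by rw [mulaut_pow_fix σ c hc i])
            _ = (Abelianization.of c) ^ m := by rw [Finset.prod_const, Finset.card_range]
        have h2 : (Abelianization.of c) ^ m = 1 := by rw [← h1]; exact htr_all c
        obtain ⟨j, hj⟩ := hG c
        have h3 : (Abelianization.of c) ^ p ^ j = 1 := by rw [← map_pow, hj, map_one]
        have h4 : Abelianization.of c = 1 := by
          have o1 := orderOf_dvd_of_pow_eq_one h2
          have o2 := orderOf_dvd_of_pow_eq_one h3
          have o3 : orderOf (Abelianization.of c) ∣ 1 := by
            have h5 := Nat.dvd_gcd o1 o2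
            rwa [Nat.Coprime.gcd_eq_one (hmc.pow_right j)] at h5
          rw [Nat.dvd_one] at o3
          exact orderOf_eq_one_iff.mp o3
        exact (QuotientGroup.eq_one_iff c).mp h4
      have hp_fix : ∀ x : G, σ (x ^ p) = x ^ p := fun x => hD_fix _ (hpD x)
      have hp_cent : ∀ x y : G, x ^ p * y = y * x ^ p :=
        fun x y => cent _ (hC_le _ (hp_fix x)) y
      -- commutator element facts
      have hcfact : ∀ x y : G, (y * x = x * y * (y⁻¹ * x⁻¹ * y * x)) ∧
          (∀ z : G, (y⁻¹ * x⁻¹ * y * x) * z = z * (y⁻¹ * x⁻¹ * y * x)) ∧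
          (y⁻¹ * x⁻¹ * y * x) ^ p = 1 := by
        intro x y
        have hcmem : y⁻¹ * x⁻¹ * y * x ∈ commutator G := by
          have h := Subgroup.commutator_mem_commutator
            (Subgroup.mem_top y⁻¹) (Subgroup.mem_top x⁻¹)
          simpa [commutatorElement_def, commutator_def] using h
        have hcz : ∀ z : G, (y⁻¹ * x⁻¹ * y * x) * z = z * (y⁻¹ * x⁻¹ * y * x) :=
          fun z => cent _ hcmem z
        have heq : y * x = x * y * (y⁻¹ * x⁻¹ * y * x) := by group
        refine ⟨heq, hcz, ?_⟩
        have h1 := comm_pow_right x y _ heq (hcz x) p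
        have h2 : y * x ^ p = x ^ p * y := (hp_cent x y).symm
        rw [h2] at h1
        nth_rewrite 1 [← mul_one (x ^ p * y)] at h1
        exact (mul_left_cancel h1).symm
      have hpk : p ∣ Nat.choose k 2 := by
        by_cases hp2 : p = 2
        · rw [hkdef, if_pos hp2, hp2]; decide
        · rw [hkdef, if_neg hp2]
          have hodd : Odd p := (Fact.out (p := p.Prime)).odd_of_ne_two hp2
          obtain ⟨t, ht⟩ := hodd
          rw [Nat.choose_two_right]
          have h2 : p - 1 = 2 * t := by omega
          rw [h2, Nat.mul_div_assoc p (dvd_mul_right 2 t), Nat.mul_div_cancel_left t two_pos]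
          exact dvd_mul_right p t
      have hgk_fix : ∀ x : G, σ (x ^ k) = x ^ k := by
        intro x
        by_cases hp2 : p = 2
        · have hk4 : k = 4 := by rw [hkdef, if_pos hp2]
          have h42 : x ^ k = (x ^ 2) ^ 2 := by rw [← pow_mul, hk4]
          have h2 := hp_fix x
          rw [hp2] at h2
          rw [h42, map_pow, h2]
        · have hkp : k = p := by rw [hkdef, if_neg hp2]
          rw [hkp]; exact hp_fix x
      have hmulk : ∀ x y : G, (x * y) ^ k = x ^ k * y ^ k := by
        intro x y
        obtain ⟨heq, hcz, hcp⟩ := hcfact x y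
        have hexp := mul_pow_expand x y _ heq (hcz x) (hcz y) k
        have hck : (y⁻¹ * x⁻¹ * y * x) ^ (Nat.choose k 2) = 1 := by
          obtain ⟨t, ht⟩ := hpk
          rw [ht, pow_mul, hcp, one_pow]
        rw [hexp, hck, mul_one]
      have hSk : ∀ x : G, (x⁻¹ * σ x) ^ k = 1 := by
        intro x
        have h2 : (σ x) ^ k = x ^ k := by rw [← map_pow, hgk_fix x]
        have h3 : x * (x⁻¹ * σ x) = σ x := mul_inv_cancel_left x (σ x)
        have h4 : (x * (x⁻¹ * σ x)) ^ k = x ^ k * (x⁻¹ * σ x) ^ k := hmulk x _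
        rw [h3, h2] at h4
        nth_rewrite 1 [← mul_one (x ^ k)] at h4
        exact (mul_left_cancel h4).symm
      have hall : ∀ x : G, x ^ k = 1 := by
        have hle : H ≤
            { carrier := {x : G | x ^ k = 1}
              one_mem' := one_pow k
              mul_mem' := by
                intro a b ha hb
                show (a * b) ^ k = 1
                rw [Set.mem_setOf_eq] at ha hb
                rw [hmulk, ha, hb, one_mul]
              inv_mem' := by
                intro a ha
                rw [Set.mem_setOf_eq] at ha ⊢
                rw [inv_pow, ha, inv_one] } := by
          refine (Subgroup.closure_le _).mpr ?_
          rintro y ⟨a, rfl⟩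
          exact hSk a
        exact fun x => hle (hmemH x)
      exact hg (hfix g (hmemH g) (hall g))
    · -- easy case : H proper
      have h1 : ∀ x ∈ H, σ x ∈ H :=
        hclos S σ (fun x hx => Subgroup.subset_closure (hS_σ x hx))
      have h2 : ∀ x ∈ H, σ.symm x ∈ H :=
        hclos S σ.symm (fun x hx => Subgroup.subset_closure (hS_σ' x hx))
      have hfixH := key H h1 h2 hH (fun x hx => hx)
      have hc : g⁻¹ * σ g ∈ H := Subgroup.subset_closure ⟨g, rfl⟩
      have hcfix : σ (g⁻¹ * σ g) = g⁻¹ * σ g := hfixH _ hc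
      have hpow : ∀ j : ℕ, (σ ^ j) g = g * (g⁻¹ * σ g) ^ j := by
        intro j
        induction j with
        | zero => simp
        | succ j ihj =>
          rw [pow_succ', MulAut.mul_apply, ihj, map_mul, map_pow, hcfix,
            pow_succ' (g⁻¹ * σ g) j, ← mul_assoc, mul_inv_cancel_left]
      have hm : g = g * (g⁻¹ * σ g) ^ m := by
        have := hpow m
        rwa [hσm, MulAut.one_apply] at this
      have hcm : (g⁻¹ * σ g) ^ m = 1 := by
        have h := hm
        nth_rewrite 1 [← mul_one g] at h
        exact (mul_left_cancel h).symm
      have hone := orderone_of_coprime hG hmc _ hcm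
      calc σ g = g * (g⁻¹ * σ g) := (mul_inv_cancel_left g (σ g)).symm
        _ = g := by rw [hone, mul_one]

theorem stmt11 {G Q : Type*} [Group G] [Group Q] [Finite G] [Finite Q]
    (p : ℕ) [Fact p.Prime] (hG : IsPGroup p G)
    (φ : Q →* MulAut G) (hφ : Function.Injective φ)
    (hcop : Nat.Coprime (Nat.card Q) p)
    (hfix : ∀ x ∈ Subgroup.closure {x : G | ∃ (g : G) (σ : Q), x = g⁻¹ * φ σ g},
      x ^ (if p = 2 then 4 else p) = 1 → ∀ σ : Q, φ σ x = x) :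
    ∀ σ : Q, σ = 1 := by
  intro σ0
  have hm0 : 0 < Nat.card Q := Nat.card_pos
  have hpowm : (φ σ0) ^ Nat.card Q = 1 := by
    rw [← map_pow, pow_card_eq_one', map_one]
  have hsub : Subgroup.closure {x : G | ∃ g : G, x = g⁻¹ * (φ σ0) g} ≤
      Subgroup.closure {x : G | ∃ (g : G) (σ : Q), x = g⁻¹ * φ σ g} :=
    Subgroup.closure_mono (fun x ⟨g, hg⟩ => ⟨g, σ0, hg⟩)
  have hfix' : ∀ x ∈ Subgroup.closure {x : G | ∃ g : G, x = g⁻¹ * (φ σ0) g},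
      x ^ (if p = 2 then 4 else p) = 1 → (φ σ0) x = x :=
    fun x hx hk => hfix x (hsub hx) hk σ0
  have hall : ∀ g : G, (φ σ0) g = g :=
    auxmain (Nat.card G) G le_rfl p hG (φ σ0) (Nat.card Q) hm0 hcop hpowm hfix'
  apply hφ
  rw [map_one]
  exact MulEquiv.ext hall
end
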